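/- arXiv:1310.2355 — 6 statements merged into one kernel-verified Lean document; each statement's English description precedes it below -/
import Mathlib

section
/- In any edge coloring of K_{2,t} with k colors that is a 3-rainbow coloring, the number t of vertices in the larger part satisfies t ≤ 2k². Consequently, rx₃(K_{2,t}) tends to infinity as t → ∞. -/
open SimpleGraph Finset

variable {V : Type*} {W : Type*}

/-- A rainbow tree in `G` w.r.t. coloring `c` containing `x, y, z`. -/
def SimpleGraph.RainbowTreeFor (G : SimpleGraph V) (c : Sym2 V → ℕ) (x y z : V) : Prop :=
  ∃ T : G.Subgraph, T.coe.IsTree ∧ x ∈ T.verts ∧ y ∈ T.verts ∧ z ∈ T.verts ∧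
    Set.InjOn c T.edgeSet

/-- `c` is a 3-rainbow coloring of `G` using colors `< k`. -/
def SimpleGraph.IsRainbow3Coloring (G : SimpleGraph V) (c : Sym2 V → ℕ) (k : ℕ) : Prop :=
  (∀ e ∈ G.edgeSet, c e < k) ∧ ∀ x y z : V, G.RainbowTreeFor c x y z

/-- The 3-rainbow index of `G`. -/
noncomputable def SimpleGraph.rx3 (G : SimpleGraph V) : ℕ :=
  sInf {k | ∃ c, G.IsRainbow3Coloring c k}

/-- `D` is a `k`-dominating set. -/
def SimpleGraph.IsKDominatingSet (G : SimpleGraph V) (k : ℕ) (D : Set V) : Prop :=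
  ∀ v ∉ D, k ≤ (G.neighborSet v ∩ D).ncard

/-- `D` is a connected `k`-dominating set. -/
def SimpleGraph.IsConnectedKDominatingSet (G : SimpleGraph V) (k : ℕ) (D : Set V) : Prop :=
  G.IsKDominatingSet k D ∧ (G.induce D).Connected

/-- The connected `k`-domination number (`⊤` if no connected `k`-dominating set exists). -/
noncomputable def SimpleGraph.connectedKDominationNum (G : SimpleGraph V) (k : ℕ) : ℕ∞ :=
  sInf {m | ∃ D : Set V, G.IsConnectedKDominatingSet k D ∧ (D.ncard : ℕ∞) = m}

/-- The domination number. -/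
noncomputable def SimpleGraph.domNum (G : SimpleGraph V) : ℕ∞ :=
  sInf {m | ∃ D : Set V, G.IsKDominatingSet 1 D ∧ (D.ncard : ℕ∞) = m}

/-- Maximum number of connected components of `G - u` over vertices `u`. -/
noncomputable def SimpleGraph.qmax [Fintype V] (G : SimpleGraph V) : ℕ :=
  Finset.univ.sup fun u : V => Nat.card (G.induce ({u}ᶜ : Set V)).ConnectedComponent

/-- `G` is 2-connected. -/
def SimpleGraph.TwoConnectedG [Fintype V] (G : SimpleGraph V) : Prop :=
  3 ≤ Fintype.card V ∧ G.Connected ∧ ∀ v : V, (G.induce ({v}ᶜ : Set V)).Connected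

/-- `B` is (the vertex set of) a block of `G`: a maximal set inducing a connected
subgraph without cut vertices. -/
def SimpleGraph.IsBlockSet (G : SimpleGraph V) (B : Set V) : Prop :=
  (G.induce B).Connected ∧
  (∀ v ∈ B, B = {v} ∨ (G.induce (B \ {v})).Connected) ∧
  ∀ B' : Set V, B ⊆ B' →
    ((G.induce B').Connected ∧ ∀ v ∈ B', B' = {v} ∨ (G.induce (B' \ {v})).Connected) →
    B' = B

/-- The induced subgraph on `B` is a cycle. -/
def SimpleGraph.IsCycleSet (G : SimpleGraph V) (B : Set V) : Prop :=
  (G.induce B).Connected ∧ 3 ≤ B.ncard ∧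
    ∀ v : B, ((G.induce B).neighborSet v).ncard = 2

/-- `G` has no induced subgraph isomorphic to `H`. -/
def IsInducedSubgraphFree (G : SimpleGraph V) (H : SimpleGraph W) : Prop :=
  ¬ ∃ f : W ↪ V, ∀ a b : W, G.Adj (f a) (f b) ↔ H.Adj a b


lemma exists_adj_of_reachable_ne {V : Type*} {G : SimpleGraph V} {a b : V}
    (h : G.Reachable a b) (hne : a ≠ b) : ∃ y, G.Adj a y := by
  obtain ⟨p⟩ := h
  exact ⟨_, SimpleGraph.Walk.adj_snd (SimpleGraph.Walk.not_nil_of_ne (p := p) hne)⟩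

/-- The star subgraph with center `v0` and leaves `L`. -/
def starSub {V : Type*} (G : SimpleGraph V) (v0 : V) (L : Set V)
    (h : ∀ w ∈ L, w ≠ v0 → G.Adj v0 w) : G.Subgraph where
  verts := insert v0 L
  Adj x y := (x = v0 ∧ y ∈ L ∧ y ≠ v0) ∨ (y = v0 ∧ x ∈ L ∧ x ≠ v0)
  adj_sub := by
    rintro x y (⟨rfl, hy, hy'⟩ | ⟨rfl, hx, hx'⟩)
    · exact h y hy hy'
    · exact (h x hx hx').symm
  edge_vert := by
    rintro x y (⟨rfl, hy, hy'⟩ | ⟨rfl, hx, hx'⟩)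
    · exact Set.mem_insert _ _
    · exact Set.mem_insert_of_mem _ hx
  symm := ⟨by rintro x y (h | h); exacts [Or.inr h, Or.inl h]⟩

lemma starSub_isTree {V : Type*} (G : SimpleGraph V) (v0 : V) (L : Set V)
    (h : ∀ w ∈ L, w ≠ v0 → G.Adj v0 w) : (starSub G v0 L h).coe.IsTree := by
  set T := starSub G v0 L h with hT
  have hc0 : v0 ∈ T.verts := Set.mem_insert _ _
  have key : ∀ a : T.verts, T.coe.Reachable a ⟨v0, hc0⟩ := by
    intro a
    by_cases ha : (a : V) = v0
    · exact SimpleGraph.Reachable.refl _ |>.mono le_rfl |> (fun r => (Subtype.ext ha : a = ⟨v0, hc0⟩) ▸ r)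
    · have hL : (a : V) ∈ L := by
        rcases a.2 with h' | h'
        · exact absurd h' ha
        · exact h'
      exact SimpleGraph.Adj.reachable (Or.inr ⟨rfl, hL, ha⟩)
  constructor
  · haveI : Nonempty T.verts := ⟨⟨v0, hc0⟩⟩
    exact ⟨fun a b => (key a).trans (key b).symm⟩
  · rw [isAcyclic_iff_forall_adj_isBridge]
    -- key sub-claim: any leaf's only neighbor is the center
    have leafnbr : ∀ a y : T.verts, (a : V) ≠ v0 → T.coe.Adj a y → (y : V) = v0 := by
      intro a y ha hadj
      rcases hadj with ⟨h1, _, _⟩ | ⟨h1, _, _⟩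
      · exact absurd h1 ha
      · exact h1
    intro a b hab
    rw [SimpleGraph.isBridge_iff]
    intro hr
    rcases hab with ⟨ha, hbL, hbne⟩ | ⟨hb, haL, hane⟩
    · -- a is center, b is leaf
      have hne : b ≠ a := fun hEq => hbne (hEq ▸ ha)
      obtain ⟨y, hy⟩ := exists_adj_of_reachable_ne hr.symm hne
      rw [SimpleGraph.deleteEdges_adj] at hy
      obtain ⟨hy1, hy2⟩ := hy
      have hyv : (y : V) = v0 := leafnbr b y hbne hy1
      have : y = a := Subtype.ext (hyv.trans ha.symm)
      subst this
      exact hy2 (by rw [Set.mem_singleton_iff, Sym2.eq_swap])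
    · -- b is center, a is leaf
      have hne : a ≠ b := fun hEq => hane (hEq ▸ hb)
      obtain ⟨y, hy⟩ := exists_adj_of_reachable_ne hr hne
      rw [SimpleGraph.deleteEdges_adj] at hy
      obtain ⟨hy1, hy2⟩ := hy
      have hyv : (y : V) = v0 := leafnbr a y hane hy1
      have : y = b := Subtype.ext (hyv.trans hb.symm)
      subst this
      exact hy2 (Set.mem_singleton _)

lemma rainbow_of_star {V : Type*} (G : SimpleGraph V) (c : Sym2 V → ℕ)
    (hc : Function.Injective c) (v0 : V) (L : Set V)
    (h : ∀ w ∈ L, w ≠ v0 → G.Adj v0 w) {x y z : V}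
    (hx : x ∈ insert v0 L) (hy : y ∈ insert v0 L) (hz : z ∈ insert v0 L) :
    G.RainbowTreeFor c x y z :=
  ⟨starSub G v0 L h, starSub_isTree G v0 L h, hx, hy, hz, hc.injOn⟩

lemma exists_coloring (t : ℕ) (ht : 1 ≤ t) :
    ∃ k c, (completeBipartiteGraph (Fin 2) (Fin t)).IsRainbow3Coloring c k := by
  classical
  set e := Fintype.equivFin (Sym2 (Fin 2 ⊕ Fin t)) with he
  refine ⟨Fintype.card (Sym2 (Fin 2 ⊕ Fin t)), fun s => (e s : ℕ), fun _ _ => (e _).isLt, ?_⟩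
  have hc : Function.Injective (fun s => ((e s : ℕ))) :=
    fun a b hab => e.injective (Fin.ext hab)
  set w0 : Fin t := ⟨0, ht⟩ with hw0
  intro x y z
  rcases x with a | w <;> rcases y with b | w' <;> rcases z with d | w''
  · exact rainbow_of_star _ _ hc (Sum.inr w0) {Sum.inl a, Sum.inl b, Sum.inl d}
      (by rintro u hu -; rcases hu with rfl | rfl | rfl <;> simp) (by simp) (by simp) (by simp)
  · exact rainbow_of_star _ _ hc (Sum.inr w'') {Sum.inl a, Sum.inl b}
      (by rintro u hu -; rcases hu with rfl | rfl <;> simp) (by simp) (by simp) (by simp)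
  · exact rainbow_of_star _ _ hc (Sum.inr w') {Sum.inl a, Sum.inl d}
      (by rintro u hu -; rcases hu with rfl | rfl <;> simp) (by simp) (by simp) (by simp)
  · exact rainbow_of_star _ _ hc (Sum.inl a) {Sum.inr w', Sum.inr w''}
      (by rintro u hu -; rcases hu with rfl | rfl <;> simp) (by simp) (by simp) (by simp)
  · exact rainbow_of_star _ _ hc (Sum.inr w) {Sum.inl b, Sum.inl d}
      (by rintro u hu -; rcases hu with rfl | rfl <;> simp) (by simp) (by simp) (by simp)
  · exact rainbow_of_star _ _ hc (Sum.inl b) {Sum.inr w, Sum.inr w''}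
      (by rintro u hu -; rcases hu with rfl | rfl <;> simp) (by simp) (by simp) (by simp)
  · exact rainbow_of_star _ _ hc (Sum.inl d) {Sum.inr w, Sum.inr w'}
      (by rintro u hu -; rcases hu with rfl | rfl <;> simp) (by simp) (by simp) (by simp)
  · exact rainbow_of_star _ _ hc (Sum.inl 0) {Sum.inr w, Sum.inr w', Sum.inr w''}
      (by rintro u hu -; rcases hu with rfl | rfl | rfl <;> simp) (by simp) (by simp) (by simp)

lemma bound_lemma (t k : ℕ) (c : Sym2 (Fin 2 ⊕ Fin t) → ℕ)
    (h : (completeBipartiteGraph (Fin 2) (Fin t)).IsRainbow3Coloring c k) : t ≤ 2 * k ^ 2 := by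
  classical
  by_contra hlt
  push_neg at hlt
  obtain ⟨hcol, hrt⟩ := h
  set f : Fin t → ℕ × ℕ :=
    fun w => (c s(Sum.inl 0, Sum.inr w), c s(Sum.inl 1, Sum.inr w)) with hf
  have hmaps : ∀ w ∈ (univ : Finset (Fin t)), f w ∈ (range k ×ˢ range k) := by
    intro w _
    simp only [hf, mem_product, mem_range]
    constructor <;> exact hcol _ (by simp)
  have hcard : (range k ×ˢ range k).card * 2 < (univ : Finset (Fin t)).card := by
    have h2 : k * k = k ^ 2 := (sq k).symm
    simp only [card_product, card_range, card_univ, Fintype.card_fin]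
    omega
  obtain ⟨p, _, hfib⟩ := Finset.exists_lt_card_fiber_of_mul_lt_card_of_maps_to hmaps hcard
  set s := univ.filter (fun x => f x = p) with hs
  obtain ⟨w1, hw1⟩ : s.Nonempty := card_pos.mp (by omega)
  obtain ⟨w2, hw2⟩ : (s.erase w1).Nonempty :=
    card_pos.mp (by rw [card_erase_of_mem hw1]; omega)
  obtain ⟨w3, hw3⟩ : ((s.erase w1).erase w2).Nonempty := by
    refine card_pos.mp ?_
    rw [card_erase_of_mem hw2, card_erase_of_mem hw1]
    omega
  have hw2' : w2 ∈ s := mem_of_mem_erase hw2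
  have hw3' : w3 ∈ s := mem_of_mem_erase (mem_of_mem_erase hw3)
  have h12 : w1 ≠ w2 := fun hEq => (mem_erase.mp hw2).1 hEq.symm
  have h13 : w1 ≠ w3 := fun hEq => (mem_erase.mp (mem_of_mem_erase hw3)).1 hEq.symm
  have h23 : w2 ≠ w3 := fun hEq => (mem_erase.mp hw3).1 hEq.symm
  have hcode : ∀ w ∈ s, f w = p := fun w hw => (mem_filter.mp hw).2
  obtain ⟨T, hTtree, hm1, hm2, hm3, hinj⟩ := hrt (Sum.inr w1) (Sum.inr w2) (Sum.inr w3)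
  have key : ∀ w w' : Fin t, (hw : Sum.inr w ∈ T.verts) → Sum.inr w' ∈ T.verts → w ≠ w' →
      ∃ u : Fin 2, T.Adj (Sum.inl u) (Sum.inr w) := by
    intro w w' hw hw' hne
    have hr := hTtree.isConnected.preconnected ⟨_, hw⟩ ⟨_, hw'⟩
    have hne' : (⟨Sum.inr w, hw⟩ : T.verts) ≠ ⟨Sum.inr w', hw'⟩ := by
      simp [Subtype.ext_iff, hne]
    obtain ⟨y, hy⟩ := exists_adj_of_reachable_ne hr hne'
    have hadj : T.Adj (Sum.inr w) (y : Fin 2 ⊕ Fin t) := hy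
    have hG := T.adj_sub hadj
    obtain ⟨u | v, hyv⟩ := y
    · exact ⟨u, hadj.symm⟩
    · simp at hG
  obtain ⟨u1, hu1⟩ := key w1 w2 hm1 hm2 h12
  obtain ⟨u2, hu2⟩ := key w2 w1 hm2 hm1 h12.symm
  obtain ⟨u3, hu3⟩ := key w3 w1 hm3 hm1 h13.symm
  have main : ∀ (u : Fin 2) (wa wb : Fin t), wa ≠ wb →
      T.Adj (Sum.inl u) (Sum.inr wa) → T.Adj (Sum.inl u) (Sum.inr wb) →
      f wa = p → f wb = p → False := by
    intro u wa wb hne ha hb hfa hfb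
    have hea : s(Sum.inl u, Sum.inr wa) ∈ T.edgeSet := SimpleGraph.Subgraph.mem_edgeSet.mpr ha
    have heb : s(Sum.inl u, Sum.inr wb) ∈ T.edgeSet := SimpleGraph.Subgraph.mem_edgeSet.mpr hb
    have hceq : c s(Sum.inl u, Sum.inr wa) = c s(Sum.inl u, Sum.inr wb) := by
      have ha1 := congrArg Prod.fst hfa
      have ha2 := congrArg Prod.snd hfa
      have hb1 := congrArg Prod.fst hfb
      have hb2 := congrArg Prod.snd hfb
      simp only [hf] at ha1 ha2 hb1 hb2
      fin_cases u
      · exact ha1.trans hb1.symm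
      · exact ha2.trans hb2.symm
    have := hinj hea heb hceq
    rw [Sym2.eq_iff] at this
    rcases this with ⟨-, h2⟩ | ⟨h1, -⟩
    · exact hne (Sum.inr.injEq .. ▸ h2 : wa = wb)
    · exact absurd h1 (by simp)
  have htwo : u1 = u2 ∨ u1 = u3 ∨ u2 = u3 := by
    fin_cases u1 <;> fin_cases u2 <;> fin_cases u3 <;> simp
  rcases htwo with hEq | hEq | hEq
  · exact main u1 w1 w2 h12 hu1 (hEq ▸ hu2) (hcode w1 hw1) (hcode w2 hw2')
  · exact main u1 w1 w3 h13 hu1 (hEq ▸ hu3) (hcode w1 hw1) (hcode w3 hw3')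
  · exact main u2 w2 w3 h23 hu2 (hEq ▸ hu3) (hcode w2 hw2') (hcode w3 hw3')

theorem stmt3 :
    (∀ (t k : ℕ) (c : Sym2 (Fin 2 ⊕ Fin t) → ℕ),
      (completeBipartiteGraph (Fin 2) (Fin t)).IsRainbow3Coloring c k → t ≤ 2 * k ^ 2) ∧
    Filter.Tendsto (fun t => (completeBipartiteGraph (Fin 2) (Fin t)).rx3)
      Filter.atTop Filter.atTop := by
  refine ⟨bound_lemma, ?_⟩
  rw [Filter.tendsto_atTop_atTop]
  intro b
  refine ⟨2 * b ^ 2 + 1, fun t ht => ?_⟩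
  have ht1 : 1 ≤ t := le_trans (Nat.le_add_left 1 (2 * b ^ 2)) ht
  obtain ⟨k0, c0, hc0⟩ := exists_coloring t ht1
  have hmem : (completeBipartiteGraph (Fin 2) (Fin t)).rx3 ∈
      {k | ∃ c, (completeBipartiteGraph (Fin 2) (Fin t)).IsRainbow3Coloring c k} :=
    Nat.sInf_mem ⟨k0, c0, hc0⟩
  obtain ⟨c1, hc1⟩ := hmem
  have hb := bound_lemma t _ c1 hc1
  by_contra hlt
  push_neg at hlt
  have hpow : (completeBipartiteGraph (Fin 2) (Fin t)).rx3 ^ 2 ≤ b ^ 2 :=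
    Nat.pow_le_pow_left (le_of_lt hlt) 2
  omega
end

section
/- In the complete bipartite graph K_{3,t} with parts U = {u₁,u₂,u₃} and W (|W| = t), for any 3-rainbow coloring c with k colors: at most two vertices of W can share the same color code unless the three coordinates of that code are pairwise distinct. In particular, if t > 2k³ then some three vertices of W share a common color code with three pairwise distinct colors. -/
open SimpleGraph Finset

variable {V : Type*} {W : Type*}

lemma aux_nbr {V : Type*} {G : SimpleGraph V} (T : G.Subgraph) (hT : T.coe.Connected)
    {x y : V} (hx : x ∈ T.verts) (hy : y ∈ T.verts) (hxy : x ≠ y) :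
    ∃ v, T.Adj x v := by
  obtain ⟨p⟩ := hT ⟨x, hx⟩ ⟨y, hy⟩
  have hnil : ¬ p.Nil := SimpleGraph.Walk.not_nil_of_ne (by simp [Subtype.ext_iff, hxy])
  exact ⟨(p.getVert 1 : T.verts), SimpleGraph.Walk.adj_snd hnil⟩

theorem stmt4 (t k : ℕ) (c : Sym2 (Fin 3 ⊕ Fin t) → ℕ)
    (hc : (completeBipartiteGraph (Fin 3) (Fin t)).IsRainbow3Coloring c k) :
    (∀ w₁ w₂ w₃ : Fin t, w₁ ≠ w₂ → w₁ ≠ w₃ → w₂ ≠ w₃ →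
      (fun i : Fin 3 => c s(Sum.inl i, Sum.inr w₁)) =
        (fun i : Fin 3 => c s(Sum.inl i, Sum.inr w₂)) →
      (fun i : Fin 3 => c s(Sum.inl i, Sum.inr w₁)) =
        (fun i : Fin 3 => c s(Sum.inl i, Sum.inr w₃)) →
      Function.Injective fun i : Fin 3 => c s(Sum.inl i, Sum.inr w₁)) ∧
    (2 * k ^ 3 < t → ∃ w₁ w₂ w₃ : Fin t, w₁ ≠ w₂ ∧ w₁ ≠ w₃ ∧ w₂ ≠ w₃ ∧
      (fun i : Fin 3 => c s(Sum.inl i, Sum.inr w₁)) =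
        (fun i : Fin 3 => c s(Sum.inl i, Sum.inr w₂)) ∧
      (fun i : Fin 3 => c s(Sum.inl i, Sum.inr w₁)) =
        (fun i : Fin 3 => c s(Sum.inl i, Sum.inr w₃)) ∧
      Function.Injective fun i : Fin 3 => c s(Sum.inl i, Sum.inr w₁)) := by
  have hpart1 : ∀ w₁ w₂ w₃ : Fin t, w₁ ≠ w₂ → w₁ ≠ w₃ → w₂ ≠ w₃ →
      (fun i : Fin 3 => c s(Sum.inl i, Sum.inr w₁)) =
        (fun i : Fin 3 => c s(Sum.inl i, Sum.inr w₂)) →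
      (fun i : Fin 3 => c s(Sum.inl i, Sum.inr w₁)) =
        (fun i : Fin 3 => c s(Sum.inl i, Sum.inr w₃)) →
      Function.Injective fun i : Fin 3 => c s(Sum.inl i, Sum.inr w₁) := by
    intro w₁ w₂ w₃ h12 h13 h23 he2 he3
    obtain ⟨T, hTtree, hv1, hv2, hv3, hinj⟩ := hc.2 (Sum.inr w₁) (Sum.inr w₂) (Sum.inr w₃)
    have hconn := hTtree.isConnected
    have key : ∀ (w w' : Fin t), Sum.inr w ∈ T.verts → (Sum.inr w' : Fin 3 ⊕ Fin t) ∈ T.verts →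
        w ≠ w' → ∃ a : Fin 3, s(Sum.inl a, Sum.inr w) ∈ T.edgeSet := by
      intro w w' hw hw' hne
      obtain ⟨v, hadj⟩ := aux_nbr T hconn hw hw' (by simp [hne])
      match v with
      | Sum.inl a => exact ⟨a, hadj.symm⟩
      | Sum.inr u => exact absurd (T.adj_sub hadj) (by simp)
    obtain ⟨a₁, hm1⟩ := key w₁ w₂ hv1 hv2 h12
    obtain ⟨a₂, hm2⟩ := key w₂ w₁ hv2 hv1 h12.symm
    obtain ⟨a₃, hm3⟩ := key w₃ w₁ hv3 hv1 h13.symm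
    -- colors of the three edges are pairwise distinct
    have g12 : c s(Sum.inl a₁, Sum.inr w₁) ≠ c s(Sum.inl a₂, Sum.inr w₂) := by
      intro h
      have := hinj hm1 hm2 h
      simp [Sym2.eq_iff, h12] at this
    have g13 : c s(Sum.inl a₁, Sum.inr w₁) ≠ c s(Sum.inl a₃, Sum.inr w₃) := by
      intro h
      have := hinj hm1 hm3 h
      simp [Sym2.eq_iff, h13] at this
    have g23 : c s(Sum.inl a₂, Sum.inr w₂) ≠ c s(Sum.inl a₃, Sum.inr w₃) := by
      intro h
      have := hinj hm2 hm3 h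
      simp [Sym2.eq_iff, h23] at this
    -- rewrite in terms of the code of w₁
    have e2 : ∀ i, c s(Sum.inl i, Sum.inr w₂) = c s(Sum.inl i, Sum.inr w₁) :=
      fun i => (congrFun he2 i).symm
    have e3 : ∀ i, c s(Sum.inl i, Sum.inr w₃) = c s(Sum.inl i, Sum.inr w₁) :=
      fun i => (congrFun he3 i).symm
    rw [e2] at g12 g23
    rw [e3] at g13 g23
    have n12 : a₁ ≠ a₂ := fun h => g12 (by rw [h])
    have n13 : a₁ ≠ a₃ := fun h => g13 (by rw [h])
    have n23 : a₂ ≠ a₃ := fun h => g23 (by rw [h])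
    have hall : ∀ x : Fin 3, x = a₁ ∨ x = a₂ ∨ x = a₃ := by
      intro x
      have v12 : (a₁ : ℕ) ≠ (a₂ : ℕ) := Fin.val_ne_of_ne n12
      have v13 : (a₁ : ℕ) ≠ (a₃ : ℕ) := Fin.val_ne_of_ne n13
      have v23 : (a₂ : ℕ) ≠ (a₃ : ℕ) := Fin.val_ne_of_ne n23
      have b1 := a₁.isLt; have b2 := a₂.isLt; have b3 := a₃.isLt; have bx := x.isLt
      have : (x : ℕ) = (a₁ : ℕ) ∨ (x : ℕ) = (a₂ : ℕ) ∨ (x : ℕ) = (a₃ : ℕ) := by omega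
      rcases this with h | h | h
      · exact Or.inl (Fin.ext h)
      · exact Or.inr (Or.inl (Fin.ext h))
      · exact Or.inr (Or.inr (Fin.ext h))
    intro i j hij
    simp only at hij
    rcases hall i with rfl | rfl | rfl <;> rcases hall j with rfl | rfl | rfl <;>
      first
        | rfl
        | (exact absurd hij g12)
        | (exact absurd hij g13)
        | (exact absurd hij g23)
        | (exact absurd hij.symm g12)
        | (exact absurd hij.symm g13)
        | (exact absurd hij.symm g23)
  refine ⟨hpart1, ?_⟩
  intro ht
  have hcol : ∀ (w : Fin t) (i : Fin 3), c s(Sum.inl i, Sum.inr w) < k := by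
    intro w i
    exact hc.1 _ (by simp)
  let f : Fin t → Fin k × Fin k × Fin k := fun w =>
    (⟨_, hcol w 0⟩, ⟨_, hcol w 1⟩, ⟨_, hcol w 2⟩)
  have hcard : Fintype.card (Fin k × Fin k × Fin k) * 2 < Fintype.card (Fin t) := by
    simp only [Fintype.card_prod, Fintype.card_fin]
    nlinarith [ht]
  obtain ⟨y, hy⟩ := Fintype.exists_lt_card_fiber_of_mul_lt_card (f := f) hcard
  rw [Finset.two_lt_card_iff] at hy
  obtain ⟨w₁, w₂, w₃, hw1, hw2, hw3, d12, d13, d23⟩ := hy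
  simp only [Finset.mem_filter, Finset.mem_univ, true_and] at hw1 hw2 hw3
  have hf12 : f w₁ = f w₂ := hw1.trans hw2.symm
  have hf13 : f w₁ = f w₃ := hw1.trans hw3.symm
  have eq12 : (fun i : Fin 3 => c s(Sum.inl i, Sum.inr w₁)) =
      (fun i : Fin 3 => c s(Sum.inl i, Sum.inr w₂)) := by
    funext i
    have h0 := congrArg (fun p => (p.1 : ℕ)) hf12
    have h1 := congrArg (fun p => (p.2.1 : ℕ)) hf12
    have h2 := congrArg (fun p => (p.2.2 : ℕ)) hf12
    simp only [f] at h0 h1 h2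
    fin_cases i <;> assumption
  have eq13 : (fun i : Fin 3 => c s(Sum.inl i, Sum.inr w₁)) =
      (fun i : Fin 3 => c s(Sum.inl i, Sum.inr w₃)) := by
    funext i
    have h0 := congrArg (fun p => (p.1 : ℕ)) hf13
    have h1 := congrArg (fun p => (p.2.1 : ℕ)) hf13
    have h2 := congrArg (fun p => (p.2.2 : ℕ)) hf13
    simp only [f] at h0 h1 h2
    fin_cases i <;> assumption
  exact ⟨w₁, w₂, w₃, d12, d13, d23, eq12, eq13, hpart1 w₁ w₂ w₃ d12 d13 d23 eq12 eq13⟩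
end

section
/- Let G be a connected graph of order n with minimum degree δ(G) ≥ 2, and let D be a connected dominating set of G. Then there exists a set D' ⊇ D that is a connected 2-dominating set of G with |D'| ≤ n/2 + |D|/2. -/
open SimpleGraph Finset

variable {V : Type*} {W : Type*}

theorem stmt5 {V : Type*} [Fintype V] (G : SimpleGraph V) [DecidableRel G.Adj]
    (h : G.Connected) (hδ : 2 ≤ G.minDegree) (D : Set V)
    (hD : G.IsConnectedKDominatingSet 1 D) :
    ∃ D' : Set V, D ⊆ D' ∧ G.IsConnectedKDominatingSet 2 D' ∧
      2 * D'.ncard ≤ Fintype.card V + D.ncard := by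
  classical
  obtain ⟨hdom, hconn⟩ := hD
  -- X' : the vertices outside D having a neighbor outside D
  set X' : Set V := {x | x ∉ D ∧ ∃ y, y ∉ D ∧ G.Adj x y} with hX'def
  have hX'sub : X' ⊆ Dᶜ := fun x hx => hx.1
  -- P A : A is a "dominating set" of X' inside X'
  set P : Set V → Prop :=
    fun A => A ⊆ X' ∧ ∀ b ∈ X', b ∈ A ∨ ∃ a ∈ A, G.Adj b a with hPdef
  have hPX' : P X' := ⟨subset_rfl, fun b hb => Or.inl hb⟩
  set S : Set ℕ := {n | ∃ A, P A ∧ A.ncard = n} with hSdef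
  have hS : S.Nonempty := ⟨X'.ncard, X', hPX', rfl⟩
  obtain ⟨A, hPA, hAcard⟩ := Nat.sInf_mem hS
  have hmin : ∀ A', P A' → sInf S ≤ A'.ncard := fun A' h' => Nat.sInf_le ⟨A', h', rfl⟩
  have hAX' : A ⊆ X' := hPA.1
  have hAle : A.ncard ≤ X'.ncard := Set.ncard_le_ncard hAX' (Set.toFinite _)
  -- key: 2 * A.ncard ≤ X'.ncard
  have key : 2 * A.ncard ≤ X'.ncard := by
    by_contra hlt
    push_neg at hlt
    by_cases hcase : P (X' \ A)
    · have h1 := hmin _ hcase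
      rw [← hAcard] at h1
      rw [Set.ncard_diff hAX' (Set.toFinite _)] at h1
      omega
    · -- extract a vertex v ∈ A with no neighbor in X' \ A
      obtain ⟨v, hvX', hvA, hno⟩ :
          ∃ v ∈ X', v ∈ A ∧ ∀ a ∈ X' \ A, ¬ G.Adj v a := by
        by_contra hc
        push_neg at hc
        apply hcase
        refine ⟨Set.diff_subset, fun b hb => ?_⟩
        by_cases hbA : b ∈ A
        · obtain ⟨a, ha, hadj⟩ := hc b hb hbA
          exact Or.inr ⟨a, ha, hadj⟩
        · exact Or.inl ⟨hb, hbA⟩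
      -- then A \ {v} also dominates X'
      have hP' : P (A \ {v}) := by
        constructor
        · exact Set.diff_subset.trans hAX'
        · intro b hb
          by_cases hbv : b = v
          · subst hbv
            obtain ⟨hbD, y, hyD, hadj⟩ := hvX'
            have hyX' : y ∈ X' := ⟨hyD, b, hbD, hadj.symm⟩
            have hyA : y ∈ A := by
              by_contra hyA
              exact hno y ⟨hyX', hyA⟩ hadj
            exact Or.inr ⟨y, ⟨hyA, hadj.ne.symm⟩, hadj⟩
          · rcases hPA.2 b hb with hbA | ⟨a, haA, hadj⟩
            · exact Or.inl ⟨hbA, hbv⟩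
            · by_cases hav : a = v
              · subst hav
                have hbA : b ∈ A := by
                  by_contra hbA
                  exact hno b ⟨hb, hbA⟩ hadj.symm
                exact Or.inl ⟨hbA, hbv⟩
              · exact Or.inr ⟨a, ⟨haA, hav⟩, hadj⟩
      have h1 := hmin _ hP'
      rw [← hAcard] at h1
      have h2 : (A \ {v}).ncard = A.ncard - 1 := by
        rw [Set.ncard_diff (by simpa using hvA) (Set.toFinite _)]
        simp
      have h3 : 0 < A.ncard := (Set.ncard_pos (Set.toFinite _)).2 ⟨v, hvA⟩
      omega
  -- every bad vertex outside D ∪ A gets a second dominator from A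
  refine ⟨D ∪ A, Set.subset_union_left, ⟨?_, ?_⟩, ?_⟩
  · -- 2-domination
    intro v hv
    have hvD : v ∉ D := fun h' => hv (Or.inl h')
    have hvA : v ∉ A := fun h' => hv (Or.inr h')
    have hsub : G.neighborSet v ∩ D ⊆ G.neighborSet v ∩ (D ∪ A) :=
      Set.inter_subset_inter_right _ Set.subset_union_left
    by_cases hgood : 2 ≤ (G.neighborSet v ∩ D).ncard
    · exact hgood.trans (Set.ncard_le_ncard hsub (Set.toFinite _))
    · push_neg at hgood
      -- v has a neighbor outside D
      have hdeg : 2 ≤ (G.neighborSet v).ncard := by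
        have h1 : G.minDegree ≤ G.degree v := G.minDegree_le_degree v
        have h2 : (G.neighborSet v).ncard = G.degree v := by
          rw [SimpleGraph.degree, ← Set.ncard_coe_finset]
          congr 1
          simp [SimpleGraph.neighborFinset]
        omega
      have hy : ∃ y, y ∉ D ∧ G.Adj v y := by
        by_contra hy
        push_neg at hy
        have heq : G.neighborSet v ∩ D = G.neighborSet v :=
          Set.inter_eq_left.2 fun y hyN => by
            by_contra hyD
            exact hy y hyD hyN
        rw [heq] at hgood
        omega
      obtain ⟨y, hyD, hadjy⟩ := hy
      have hvX' : v ∈ X' := ⟨hvD, y, hyD, hadjy⟩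
      rcases hPA.2 v hvX' with hvA' | ⟨a, haA, hadja⟩
      · exact (hvA hvA').elim
      · -- v has a neighbor d in D and neighbor a in A
        have hd1 : 1 ≤ (G.neighborSet v ∩ D).ncard := hdom v hvD
        have hdne : (G.neighborSet v ∩ D).Nonempty :=
          Set.nonempty_of_ncard_ne_zero (by omega)
        obtain ⟨d, hdN, hdD⟩ := hdne
        have haD : a ∉ D := (hX'sub (hAX' haA))
        have hda : d ≠ a := fun h' => haD (h' ▸ hdD)
        have hpair : ({d, a} : Set V) ⊆ G.neighborSet v ∩ (D ∪ A) := by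
          rintro z (rfl | rfl)
          · exact ⟨hdN, Or.inl hdD⟩
          · exact ⟨hadja, Or.inr haA⟩
        calc 2 = ({d, a} : Set V).ncard := (Set.ncard_pair hda).symm
          _ ≤ _ := Set.ncard_le_ncard hpair (Set.toFinite _)
  · -- connectivity
    have hDne : D.Nonempty := by
      have := hconn.nonempty
      obtain ⟨⟨x, hx⟩⟩ := this
      exact ⟨x, hx⟩
    rw [SimpleGraph.connected_iff]
    refine ⟨?_, ⟨⟨hDne.choose, Or.inl hDne.choose_spec⟩⟩⟩
    -- each vertex reaches a vertex of D
    have step : ∀ x (hx : x ∈ D ∪ A), ∃ (d : V) (hd : d ∈ D),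
        (G.induce (D ∪ A)).Reachable ⟨x, hx⟩ ⟨d, Or.inl hd⟩ := by
      intro x hx
      rcases hx with hxD | hxA
      · exact ⟨x, hxD, SimpleGraph.Reachable.refl _⟩
      · have hxD : x ∉ D := hX'sub (hAX' hxA)
        have hd1 : 1 ≤ (G.neighborSet x ∩ D).ncard := hdom x hxD
        have hdne : (G.neighborSet x ∩ D).Nonempty :=
          Set.nonempty_of_ncard_ne_zero (by omega)
        obtain ⟨d, hdN, hdD⟩ := hdne
        refine ⟨d, hdD, SimpleGraph.Adj.reachable ?_⟩
        exact hdN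
    -- a hom from induce D to induce (D ∪ A)
    have hhom : ∀ (d₁ d₂ : V) (h₁ : d₁ ∈ D) (h₂ : d₂ ∈ D),
        (G.induce (D ∪ A)).Reachable ⟨d₁, Or.inl h₁⟩ ⟨d₂, Or.inl h₂⟩ := by
      intro d₁ d₂ h₁ h₂
      exact (hconn.preconnected ⟨d₁, h₁⟩ ⟨d₂, h₂⟩).map
        (⟨fun x => ⟨x.1, Or.inl x.2⟩, fun h' => h'⟩ : G.induce D →g G.induce (D ∪ A))
    rintro ⟨u, hu⟩ ⟨w, hw⟩
    obtain ⟨du, hdu, ru⟩ := step u hu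
    obtain ⟨dw, hdw, rw⟩ := step w hw
    exact ru.trans ((hhom du dw hdu hdw).trans rw.symm)
  · -- cardinality
    have hdisj : Disjoint D A := by
      rw [Set.disjoint_right]
      intro a haA
      exact hX'sub (hAX' haA)
    have h1 : (D ∪ A).ncard = D.ncard + A.ncard :=
      Set.ncard_union_eq hdisj (Set.toFinite _) (Set.toFinite _)
    have h2 : D.ncard + Dᶜ.ncard = Fintype.card V := by
      rw [← Nat.card_eq_fintype_card]
      exact Set.ncard_add_ncard_compl D
    have h3 : X'.ncard ≤ Dᶜ.ncard := Set.ncard_le_ncard hX'sub (Set.toFinite _)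
    omega
end

section
/- Let G be a connected graph on n vertices with minimum degree δ ≥ 2 and let k be an integer with 1 ≤ k ≤ δ. Then the connected k-domination number satisfies γₖᶜ(G) ≤ n − q_max(G)·(δ − k + 1), where q_max(G) is the maximum number of connected components of G − u over all vertices u. -/
open SimpleGraph Finset

variable {V : Type*} {W : Type*}

private lemma reach_induce_of_subset {V : Type*} {G : SimpleGraph V} {S T : Set V} :
    ∀ {a b : ↥S} (w : (G.induce S).Walk a b), (∀ x ∈ w.support, ↑x ∈ T) →
      ∀ (ha : ↑a ∈ T) (hb : ↑b ∈ T), (G.induce T).Reachable ⟨↑a, ha⟩ ⟨↑b, hb⟩ := by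
  intro a b w
  induction w with
  | nil => intro _ ha hb; exact Reachable.refl _
  | @cons x y z hxy w ih =>
      intro hsupp ha hb
      have hy : (↑y : V) ∈ T := hsupp y (by simp)
      have h1 : (G.induce T).Adj ⟨↑x, ha⟩ ⟨↑y, hy⟩ := by
        simpa using (by simpa using hxy : G.Adj ↑x ↑y)
      exact h1.reachable.trans (ih (fun t ht => hsupp t (by simp [ht])) hy hb)

private lemma exists_noncut {V : Type*} [Fintype V] {G : SimpleGraph V} {S : Set V} {u : V}
    (hu : u ∈ S) (hconn : (G.induce S).Connected) (hcard : 2 ≤ S.ncard) :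
    ∃ v ∈ S, v ≠ u ∧ (G.induce (S \ {v})).Connected := by
  classical
  haveI : Fintype ↥S := Fintype.ofFinite _
  set H := G.induce S with hH
  have u0 : ↥S := ⟨u, hu⟩
  haveI : Nonempty ↥S := ⟨⟨u, hu⟩⟩
  obtain ⟨v, -, hv⟩ := Finset.exists_mem_eq_sup Finset.univ Finset.univ_nonempty
    (fun x : ↥S => H.dist ⟨u, hu⟩ x)
  have hvmax : ∀ x : ↥S, H.dist ⟨u, hu⟩ x ≤ H.dist ⟨u, hu⟩ v := by
    intro x
    rw [← hv]
    exact Finset.le_sup (Finset.mem_univ x)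
  -- v ≠ u
  obtain ⟨w, hwS, hwu⟩ := Set.exists_ne_of_one_lt_ncard (s := S) (by omega : 1 < S.ncard) u
  have hdw : 0 < H.dist ⟨u, hu⟩ ⟨w, hwS⟩ :=
    (hconn ⟨u, hu⟩ ⟨w, hwS⟩).pos_dist_of_ne (by simp [hwu.symm])
  have hdv : 0 < H.dist ⟨u, hu⟩ v := lt_of_lt_of_le hdw (hvmax _)
  have hvu : (↑v : V) ≠ u := by
    intro hvu
    have : v = (⟨u, hu⟩ : ↥S) := Subtype.ext hvu
    rw [this, SimpleGraph.dist_self] at hdv; exact lt_irrefl _ hdv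
  refine ⟨↑v, v.2, hvu, ?_⟩
  rw [connected_iff]
  have humem : u ∈ S \ {↑v} := ⟨hu, by simp [Ne.symm hvu]⟩
  constructor
  · -- preconnected
    have key : ∀ a : ↥(S \ {↑v}),
        (G.induce (S \ {↑v})).Reachable a ⟨u, humem⟩ := by
      intro a
      have haS : (↑a : V) ∈ S := a.2.1
      have hav : (⟨↑a, haS⟩ : ↥S) ≠ v := by
        intro hh
        exact a.2.2 (by simp [← hh])
      obtain ⟨p, hp⟩ := (hconn ⟨u, hu⟩ ⟨↑a, haS⟩).exists_walk_length_eq_dist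
      have hsupp : ∀ x ∈ p.support, (↑x : V) ∈ S \ {↑v} := by
        intro x hx
        refine ⟨x.2, ?_⟩
        simp only [Set.mem_singleton_iff]
        intro hxv
        have hxv' : x = v := Subtype.ext hxv
        subst hxv'
        -- x = v on a shortest path to a, a ≠ v : contradiction
        have h1 : H.dist ⟨u, hu⟩ x ≤ (p.takeUntil x hx).length := dist_le _
        have h2 := congr_arg Walk.length (p.take_spec hx)
        rw [Walk.length_append] at h2
        have h3 : 1 ≤ (p.dropUntil x hx).length := by
          by_contra hc
          push_neg at hc
          exact hav ((Walk.eq_of_length_eq_zero (p := p.dropUntil x hx) (by omega)).symm)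
        have h4 := hvmax ⟨↑a, haS⟩
        omega
      exact (reach_induce_of_subset p hsupp (hsupp _ p.start_mem_support)
        (hsupp _ p.end_mem_support)).symm
    intro a b
    exact (key a).trans (key b).symm
  · exact ⟨⟨u, humem⟩⟩

private lemma exists_removal {V : Type*} [Fintype V] [DecidableEq V] {G : SimpleGraph V} (u : V) :
    ∀ (m : ℕ) (S : Set V), u ∈ S → (G.induce S).Connected → m + 1 ≤ S.ncard →
    ∃ R : Finset V, ↑R ⊆ S ∧ u ∉ R ∧ R.card = m ∧ (G.induce (S \ ↑R)).Connected := by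
  intro m
  induction m with
  | zero => exact fun S hu hc _ => ⟨∅, by simp, by simp, rfl, by rw [show S \ (↑(∅:Finset V)) = S by simp]; exact hc⟩
  | succ m ih =>
    intro S hu hc hcard
    obtain ⟨v, hvS, hvu, hconn'⟩ := exists_noncut hu hc (by omega)
    have hSv : (S \ {v}).ncard = S.ncard - 1 := by
      rw [Set.ncard_diff (by simpa using hvS) (Set.toFinite _), Set.ncard_singleton]
    obtain ⟨R, hRS, huR, hcardR, hconn''⟩ := ih (S \ {v})
      ⟨hu, by simp [Ne.symm hvu]⟩ hconn' (by omega)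
    have hvR : v ∉ R := fun hv => (hRS hv).2 rfl
    refine ⟨insert v R, ?_, ?_, ?_, ?_⟩
    · intro x hx
      rcases Finset.mem_insert.mp hx with h | h
      · exact h ▸ hvS
      · exact (hRS h).1
    · simp [Finset.mem_insert, hvu, huR]
      intro hh; exact hvu hh.symm
    · rw [Finset.card_insert_of_notMem hvR, hcardR]
    · have : (S \ ↑(insert v R)) = (S \ {v}) \ ↑R := by
        ext x; simp only [Finset.coe_insert, Set.mem_diff, Set.mem_insert_iff,
          Finset.mem_coe, Set.mem_singleton_iff]
        tauto
      rw [this]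
      exact hconn''

theorem stmt9 {V : Type*} [Fintype V] (G : SimpleGraph V) [DecidableRel G.Adj]
    (h : G.Connected) (hδ : 2 ≤ G.minDegree) (k : ℕ) (hk1 : 1 ≤ k)
    (hkδ : k ≤ G.minDegree) :
    G.connectedKDominationNum k + (G.qmax * (G.minDegree - k + 1) : ℕ) ≤
      (Fintype.card V : ℕ∞) := by
  classical
  set δ := G.minDegree with hδdef
  set m := δ - k + 1 with hmdef
  have hm1 : 1 ≤ m := by omega
  have hmδ : m ≤ δ := by omega
  haveI hV : Nonempty V := h.nonempty
  obtain ⟨u, -, hu⟩ := Finset.exists_mem_eq_sup Finset.univ Finset.univ_nonempty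
      (fun u : V => Nat.card (G.induce ({u}ᶜ : Set V)).ConnectedComponent)
  set A : Set V := ({u}ᶜ : Set V) with hA
  set G' := G.induce A with hG'
  haveI : Fintype ↥A := Fintype.ofFinite _
  haveI : Fintype G'.ConnectedComponent := Fintype.ofFinite _
  set q := Nat.card G'.ConnectedComponent with hqdef
  have hqmax : G.qmax = q := hu
  -- the component sets
  set Sc : G'.ConnectedComponent → Set V :=
    fun c => {x : V | ∃ hx : x ∈ A, G'.connectedComponentMk ⟨x, hx⟩ = c} with hSc
  have huSc : ∀ c, u ∉ Sc c := by
    rintro c ⟨hx, -⟩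
    exact hx rfl
  have hmemSc : ∀ (x : ↥A) (c), x.1 ∈ Sc c ↔ G'.connectedComponentMk x = c := by
    rintro ⟨x, hx⟩ c
    constructor
    · rintro ⟨hx', hc⟩; exact hc
    · intro hc; exact ⟨hx, hc⟩
  have hdisj : ∀ c c' x, x ∈ Sc c → x ∈ Sc c' → c = c' := by
    rintro c c' x ⟨hx, hc⟩ ⟨hx', hc'⟩
    rw [← hc, ← hc']
  have hclosure : ∀ c x y, x ∈ Sc c → G.Adj x y → y ≠ u → y ∈ Sc c := by
    rintro c x y ⟨hx, hc⟩ hadj hyu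
    have hy : y ∈ A := by simpa [hA] using hyu
    have hadj' : G'.Adj ⟨x, hx⟩ ⟨y, hy⟩ := hadj
    exact ⟨hy, (ConnectedComponent.sound hadj'.symm.reachable).trans hc⟩
  -- each component has at least δ vertices
  have hScbig : ∀ c, δ ≤ (Sc c).ncard := by
    intro c
    obtain ⟨x, hx⟩ := c.exists_rep
    have hxSc : (x : V) ∈ Sc c := (hmemSc x c).mpr hx
    have hsub : {(x : V)} ∪ (G.neighborSet (x : V) \ {u}) ⊆ Sc c := by
      rintro y (hy | ⟨hy1, hy2⟩)
      · exact hy ▸ hxSc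
      · exact hclosure c x y hxSc hy1 hy2
    have h1 : ({(x : V)} ∪ (G.neighborSet (x : V) \ {u})).ncard ≤ (Sc c).ncard :=
      Set.ncard_le_ncard hsub (Set.toFinite _)
    have h2 : ({(x : V)} ∪ (G.neighborSet (x : V) \ {u})).ncard
        = 1 + (G.neighborSet (x : V) \ {u}).ncard := by
      rw [Set.ncard_union_eq (by simp [Set.disjoint_left]) (Set.toFinite _) (Set.toFinite _),
        Set.ncard_singleton]
    have h3 : (G.neighborSet (x : V)).ncard ≤ (G.neighborSet (x : V) \ {u}).ncard + 1 := by
      have : G.neighborSet (x : V) ⊆ (G.neighborSet (x : V) \ {u}) ∪ {u} := by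
        intro y hy; by_cases hyu : y = u
        · exact Or.inr (by simp [hyu])
        · exact Or.inl ⟨hy, hyu⟩
      calc (G.neighborSet (x : V)).ncard
          ≤ ((G.neighborSet (x : V) \ {u}) ∪ {u}).ncard :=
            Set.ncard_le_ncard this (Set.toFinite _)
        _ ≤ _ := by
            simpa using Set.ncard_union_le (G.neighborSet (x : V) \ {u}) {u}
    have h4 : δ ≤ (G.neighborSet (x : V)).ncard := by
      have : (G.neighborSet (x : V)).ncard = G.degree (x : V) := by
        rw [Set.ncard_eq_toFinset_card']
        rfl
      rw [this]
      exact G.minDegree_le_degree _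
    omega
  -- each component attaches to u
  have hadjU : ∀ c, ∃ y ∈ Sc c, G.Adj y u := by
    intro c
    obtain ⟨x, hx⟩ := c.exists_rep
    have hxSc : (x : V) ∈ Sc c := (hmemSc x c).mpr hx
    obtain ⟨p⟩ := h.preconnected (x : V) u
    have key : ∀ (n : ℕ) (z : V) (p : G.Walk z u), p.length = n → z ∈ Sc c →
        ∃ y ∈ Sc c, G.Adj y u := by
      intro n
      induction n with
      | zero =>
        intro z p hp hz
        cases p with
        | nil => exact absurd hz (huSc c)
        | cons h q => simp at hp
      | succ n ih =>
        intro z p hp hz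
        cases p with
        | nil => exact absurd hz (huSc c)
        | @cons _ w _ hzw q =>
          by_cases hwu : w = u
          · exact ⟨z, hz, hwu ▸ hzw⟩
          · exact ih w q (by simpa using hp) (hclosure c z w hz hzw hwu)
    exact key p.length (x : V) p rfl hxSc
  -- connectivity of each component with u
  have hconnc : ∀ c, (G.induce (Sc c ∪ {u})).Connected := by
    intro c
    have humem : u ∈ Sc c ∪ {u} := Or.inr rfl
    rw [connected_iff]
    refine ⟨?_, ⟨⟨u, humem⟩⟩⟩
    have key : ∀ a : ↥(Sc c ∪ {u}), (G.induce (Sc c ∪ {u})).Reachable a ⟨u, humem⟩ := by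
      rintro ⟨a, ha | ha⟩
      · -- a in Sc c
        obtain ⟨y, hySc, hyadj⟩ := hadjU c
        obtain ⟨haA, hac⟩ := ha
        obtain ⟨hyA, hyc⟩ := hySc
        have hreach : G'.Reachable ⟨a, haA⟩ ⟨y, hyA⟩ :=
          ConnectedComponent.exact (hac.trans hyc.symm)
        obtain ⟨w⟩ := hreach
        have hsupp : ∀ x ∈ w.support, (↑x : V) ∈ Sc c ∪ {u} := by
          intro x hx
          left
          have : G'.Reachable ⟨a, haA⟩ x := ⟨w.takeUntil x hx⟩
          exact (hmemSc x c).mpr ((ConnectedComponent.sound this.symm).trans hac)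
        have h1 := reach_induce_of_subset w hsupp (hsupp _ w.start_mem_support)
          (hsupp _ w.end_mem_support)
        have h2 : (G.induce (Sc c ∪ {u})).Adj ⟨y, Or.inl ⟨hyA, hyc⟩⟩ ⟨u, humem⟩ := hyadj
        exact h1.trans h2.reachable
      · subst ha
        exact Reachable.refl _
    intro a b
    exact (key a).trans (key b).symm
  -- choose removal sets
  have hSccard : ∀ c, m + 1 ≤ (Sc c ∪ {u}).ncard := by
    intro c
    have : (Sc c ∪ {u}).ncard = (Sc c).ncard + 1 := by
      rw [Set.union_singleton, Set.ncard_insert_of_notMem (huSc c) (Set.toFinite _)]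
    have := hScbig c
    omega
  choose Fc hFcsub hFcu hFccard hFcconn using fun c =>
    exists_removal u m (Sc c ∪ {u}) (Or.inr rfl) (hconnc c) (hSccard c)
  have hFcSc : ∀ c, ↑(Fc c) ⊆ Sc c := by
    intro c x hx
    rcases hFcsub c hx with h1 | h1
    · exact h1
    · exact absurd (h1 ▸ hx) (hFcu c)
  set R : Finset V := Finset.univ.biUnion Fc with hR
  have huR : u ∉ R := by
    simp only [hR, Finset.mem_biUnion]
    rintro ⟨c, -, hc⟩
    exact hFcu c hc
  have hRcard : R.card = q * m := by
    show (Finset.univ.biUnion Fc).card = q * m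
    rw [Finset.card_biUnion]
    · simp [hFccard, hqdef, Nat.card_eq_fintype_card, Finset.card_univ, mul_comm]
    · intro c _ c' _ hcc'
      rw [Function.onFun, Finset.disjoint_left]
      intro x hx hx'
      exact hcc' (hdisj c c' x (hFcSc c hx) (hFcSc c' hx'))
  set D : Set V := (↑R : Set V)ᶜ with hD
  have huD : u ∈ D := huR
  have hDcard : D.ncard = Fintype.card V - q * m := by
    have h1 := Set.ncard_add_ncard_compl (↑R : Set V) (Set.toFinite _) (Set.toFinite _)
    rw [Set.ncard_coe_finset, Nat.card_eq_fintype_card, hRcard] at h1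
    show ((↑R : Set V)ᶜ).ncard = _
    omega
  have hqmn : q * m ≤ Fintype.card V := by
    rw [← hRcard]
    exact le_trans (Finset.card_le_card (Finset.subset_univ R)) (le_of_eq (Finset.card_univ))
  -- D is a connected k-dominating set
  have hdom : G.IsKDominatingSet k D := by
    intro v hv
    have hvR : v ∈ R := by simpa [hD] using hv
    obtain ⟨c, -, hvFc⟩ := Finset.mem_biUnion.mp hvR
    have hvSc : v ∈ Sc c := hFcSc c hvFc
    set N := G.neighborSet v with hN
    have hNR : N ∩ ↑R ⊆ ↑(Fc c) \ {v} := by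
      rintro y ⟨hyN, hyR⟩
      obtain ⟨c', -, hyFc⟩ := Finset.mem_biUnion.mp hyR
      have hyu : y ≠ u := fun hh => huR (hh ▸ hyR)
      have hySc : y ∈ Sc c := hclosure c v y hvSc hyN hyu
      have : c' = c := hdisj c' c y (hFcSc c' hyFc) hySc
      refine ⟨this ▸ hyFc, ?_⟩
      simp only [Set.mem_singleton_iff]
      intro hyv
      rw [hyv] at hyN
      exact G.irrefl hyN
    have h1 : (N ∩ ↑R).ncard ≤ m - 1 := by
      have h2 : (↑(Fc c) \ {v} : Set V).ncard = m - 1 := by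
        rw [Set.ncard_diff (by simpa using hvFc) (Set.toFinite _),
          Set.ncard_coe_finset, hFccard, Set.ncard_singleton]
      rw [← h2]
      exact Set.ncard_le_ncard hNR (Set.toFinite _)
    have h3 : δ ≤ N.ncard := by
      have : N.ncard = G.degree v := by
        rw [hN, Set.ncard_eq_toFinset_card']
        rfl
      rw [this]
      exact G.minDegree_le_degree v
    have h4 : N ∩ D = N \ (N ∩ ↑R) := by
      ext y
      simp only [hD, Set.mem_inter_iff, Set.mem_compl_iff, Set.mem_diff, Finset.mem_coe]
      tauto
    rw [h4, Set.ncard_diff (Set.inter_subset_left) (Set.toFinite _)]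
    omega
  have hconnD : (G.induce D).Connected := by
    rw [connected_iff]
    refine ⟨?_, ⟨⟨u, huD⟩⟩⟩
    have key : ∀ a : ↥D, (G.induce D).Reachable a ⟨u, huD⟩ := by
      rintro ⟨a, ha⟩
      by_cases hau : a = u
      · subst hau; exact Reachable.refl _
      · have haA : a ∈ A := by simpa [hA] using hau
        set c := G'.connectedComponentMk ⟨a, haA⟩ with hc
        have haSc : a ∈ Sc c := ⟨haA, rfl⟩
        have haR : a ∉ R := by simpa [hD] using ha
        have haFc : a ∉ (↑(Fc c) : Set V) := fun hh =>
          haR (Finset.mem_biUnion.mpr ⟨c, Finset.mem_univ c, hh⟩)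
        have hamem : a ∈ (Sc c ∪ {u}) \ ↑(Fc c) := ⟨Or.inl haSc, haFc⟩
        have humem : u ∈ (Sc c ∪ {u}) \ ↑(Fc c) := ⟨Or.inr rfl, fun hh => hFcu c hh⟩
        have hsub : (Sc c ∪ {u}) \ ↑(Fc c) ⊆ D := by
          rintro x ⟨hx1, hx2⟩ hxR
          obtain ⟨c', -, hxFc⟩ := Finset.mem_biUnion.mp (Finset.mem_coe.mp hxR)
          rcases hx1 with hx1 | hx1
          · exact hx2 (Finset.mem_coe.mpr (hdisj c' c x (hFcSc c' hxFc) hx1 ▸ hxFc))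
          · exact huR (Finset.mem_coe.mp (hx1 ▸ hxR))
        have hreach : (G.induce ((Sc c ∪ {u}) \ ↑(Fc c))).Reachable ⟨a, hamem⟩ ⟨u, humem⟩ :=
          (hFcconn c).preconnected _ _
        obtain ⟨w⟩ := hreach
        exact reach_induce_of_subset w (fun x _ => hsub x.2) ha huD
    intro a b
    exact (key a).trans (key b).symm
  have hle : G.connectedKDominationNum k ≤ (D.ncard : ℕ∞) :=
    sInf_le ⟨D, ⟨hdom, hconnD⟩, rfl⟩
  have hfin : D.ncard + q * m = Fintype.card V := by omega
  calc G.connectedKDominationNum k + ((G.qmax * (G.minDegree - k + 1) : ℕ) : ℕ∞)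
      ≤ (D.ncard : ℕ∞) + ((q * m : ℕ) : ℕ∞) := by
        rw [hqmax]
        exact add_le_add_left hle _
    _ = ((D.ncard + q * m : ℕ) : ℕ∞) := by rw [Nat.cast_add]
    _ = (Fintype.card V : ℕ∞) := by rw [hfin]
end

section
/- If G is a 2-connected graph on n ≥ 4 vertices, then rx₃(G) ≤ n − 2. -/
open SimpleGraph Finset

variable {V : Type*} {W : Type*}

namespace RX3

open SimpleGraph Walk

variable {V : Type*} {G : SimpleGraph V}


lemma support_eq_map_getVert {u v : V} (p : G.Walk u v) :
    p.support = (List.range (p.length + 1)).map p.getVert := by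
  induction p with
  | nil => simp [Walk.getVert]
  | @cons a b c h q ih =>
      rw [Walk.support_cons, Walk.length_cons, List.range_succ_eq_map, List.map_cons,
        List.map_map]
      rw [ih]
      rfl

lemma isPath_getVert_injOn {u v : V} {p : G.Walk u v} (hp : p.IsPath) :
    ∀ i, i ≤ p.length → ∀ j, j ≤ p.length → p.getVert i = p.getVert j → i = j := by
  intro i hi j hj hij
  have hnd : p.support.Nodup := hp.support_nodup
  rw [support_eq_map_getVert] at hnd
  exact List.inj_on_of_nodup_map hnd (List.mem_range.mpr (by omega))
    (List.mem_range.mpr (by omega)) hij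

/-- No `G`-cycle has all its edges inside `H`. -/
def NoCyc (H : G.Subgraph) : Prop :=
  ∀ (v : V) (c : G.Walk v v), c.IsCycle → ¬ (∀ e ∈ c.edges, e ∈ H.edgeSet)

lemma isTree_of_noCyc {H : G.Subgraph} (hc : H.Connected) (hn : NoCyc H) : H.coe.IsTree := by
  refine ⟨hc.coe, ?_⟩
  intro v c hcyc
  have hinj : Function.Injective (H.hom : H.coe →g G) := Subtype.val_injective
  refine hn _ (c.map H.hom) (hcyc.map hinj) ?_
  intro e he
  rw [Walk.edges_map] at he
  obtain ⟨e', he', rfl⟩ := List.mem_map.mp he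
  have hmem : e' ∈ H.coe.edgeSet := c.edges_subset_edgeSet he'
  induction e' using Sym2.ind with
  | _ x y =>
    rw [SimpleGraph.mem_edgeSet] at hmem
    simpa using hmem

lemma noCyc_singleton (x : V) : NoCyc (G.singletonSubgraph x) := by
  intro v c hcyc hall
  have h3 := hcyc.three_le_length
  have hlen : c.edges.length = c.length := c.length_edges
  rcases he : c.edges with _ | ⟨e, es⟩
  · rw [he] at hlen; simp at hlen; omega
  · have := hall e (by rw [he]; exact List.mem_cons_self)
    rw [SimpleGraph.edgeSet_singletonSubgraph] at this
    exact this

lemma noCyc_pendant {H : G.Subgraph} (hn : NoCyc H) {a b : V} (hab : G.Adj a b)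
    (hb : b ∉ H.verts) : NoCyc (H ⊔ G.subgraphOfAdj hab) := by
  classical
  intro v c hcyc hall
  have hkey : ∀ e ∈ c.edges, ∀ y : V, e = s(b, y) → y = a := by
    intro e he y hey
    have hmem := hall e he
    rw [Subgraph.edgeSet_sup] at hmem
    rcases hmem with hmem | hmem
    · subst hey
      rw [Subgraph.mem_edgeSet] at hmem
      exact absurd hmem.fst_mem hb
    · rw [SimpleGraph.edgeSet_subgraphOfAdj, Set.mem_singleton_iff] at hmem
      subst hey
      rw [Sym2.eq_iff] at hmem
      rcases hmem with ⟨h1, h2⟩ | ⟨h1, h2⟩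
      · exact h2.trans h1
      · exact h2
  by_cases hsab : s(a, b) ∈ c.edges
  · -- b is in the support of c
    have hbs : b ∈ c.support := c.snd_mem_support_of_mem_edges hsab
    set c' := c.rotate b hbs with hc'def
    have hcyc' : c'.IsCycle := hcyc.rotate hbs
    have hrot : ∀ e, e ∈ c'.edges ↔ e ∈ c.edges := fun e =>
      (Walk.rotate_edges c b hbs).mem_iff
    have hnonnil : ¬ c'.Nil := hcyc'.not_nil
    rw [Walk.not_nil_iff] at hnonnil
    obtain ⟨x, hbx, q, hq⟩ := hnonnil
    have hcycq : q.IsPath ∧ s(b, x) ∉ q.edges := by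
      rw [← Walk.cons_isCycle_iff (h := hbx)]
      rw [← hq]
      exact hcyc'
    have hx : x = a := by
      apply hkey (s(b, x)) _ x rfl
      rw [← hrot, hq, Walk.edges_cons]
      exact List.mem_cons_self
    subst hx
    -- now q : G.Walk x b (x is the old a); look at its last edge
    have hrev : ¬ q.reverse.Nil := Walk.not_nil_of_ne (fun h => hab.ne h.symm)
    rw [Walk.not_nil_iff] at hrev
    obtain ⟨y, hby, q2, hq2⟩ := hrev
    have hyedge : s(b, y) ∈ q.edges := by
      have : s(b, y) ∈ q.reverse.edges := by
        rw [hq2, Walk.edges_cons]; exact List.mem_cons_self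
      rw [Walk.edges_reverse, List.mem_reverse] at this
      exact this
    have hy : y = x := by
      apply hkey (s(b, y)) _ y rfl
      rw [← hrot, hq, Walk.edges_cons]
      exact List.mem_cons.mpr (Or.inr hyedge)
    subst hy
    exact hcycq.2 hyedge
  · refine hn v c hcyc ?_
    intro e he
    have hmem := hall e he
    rw [Subgraph.edgeSet_sup] at hmem
    rcases hmem with hmem | hmem
    · exact hmem
    · rw [SimpleGraph.edgeSet_subgraphOfAdj, Set.mem_singleton_iff] at hmem
      subst hmem
      exact absurd he hsab

lemma pendant_step {T : G.Subgraph} (hc : T.Connected) (hn : NoCyc T) {a b : V}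
    (hab : G.Adj a b) (ha : a ∈ T.verts) (hb : b ∉ T.verts) :
    (T ⊔ G.subgraphOfAdj hab).Connected ∧ NoCyc (T ⊔ G.subgraphOfAdj hab) := by
  refine ⟨Subgraph.connected_sup hc.preconnected (Subgraph.subgraphOfAdj_connected hab).preconnected ⟨a, ?_⟩, noCyc_pendant hn hab hb⟩
  rw [Subgraph.verts_inf]
  exact ⟨ha, by simp⟩



/-- Attach a path `f a, f (a+1), ..., f (a+k)` of new vertices to a connected acyclic
subgraph `T` containing `f a`. -/
lemma attach_tree (f : ℕ → V) (a k : ℕ)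
    (hadj : ∀ i, a ≤ i → i < a + k → G.Adj (f i) (f (i + 1)))
    (hinj : ∀ i j, a ≤ i → i ≤ a + k → a ≤ j → j ≤ a + k → f i = f j → i = j)
    (T : G.Subgraph) (hTc : T.Connected) (hTn : NoCyc T)
    (hfa : f a ∈ T.verts) (hnew : ∀ i, a < i → i ≤ a + k → f i ∉ T.verts) :
    ∃ U : G.Subgraph, U.Connected ∧ NoCyc U ∧
      T.verts ⊆ U.verts ∧
      (∀ i, a ≤ i → i ≤ a + k → f i ∈ U.verts) ∧
      U.verts ⊆ T.verts ∪ f '' {i | a ≤ i ∧ i ≤ a + k} ∧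
      U.edgeSet ⊆ T.edgeSet ∪ (fun i => s(f i, f (i + 1))) '' {i | a ≤ i ∧ i < a + k} := by
  induction k with
  | zero =>
      refine ⟨T, hTc, hTn, subset_rfl, ?_, ?_, ?_⟩
      · intro i h1 h2
        have : i = a := by omega
        subst this; exact hfa
      · exact Set.subset_union_left
      · exact Set.subset_union_left
  | succ k ih =>
      obtain ⟨U, hUc, hUn, hTU, hmemU, hUsub, hUedge⟩ :=
        ih (fun i hi hik => hadj i hi (by omega))
          (fun i j h1 h2 h3 h4 => hinj i j h1 (by omega) h3 (by omega))
          (fun i h1 h2 => hnew i h1 (by omega))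
      have hadj' : G.Adj (f (a + k)) (f (a + k + 1)) := hadj _ (by omega) (by omega)
      have hmem : f (a + k) ∈ U.verts := hmemU _ (by omega) le_rfl
      have hnotmem : f (a + k + 1) ∉ U.verts := by
        intro hcon
        rcases hUsub hcon with h | ⟨i, ⟨hi1, hi2⟩, hieq⟩
        · exact hnew _ (by omega) (by omega) h
        · have := hinj i (a + k + 1) hi1 (by omega) (by omega) (by omega) hieq
          omega
      obtain ⟨hc', hn'⟩ := pendant_step hUc hUn hadj' hmem hnotmem
      refine ⟨U ⊔ G.subgraphOfAdj hadj', hc', hn', ?_, ?_, ?_, ?_⟩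
      · exact hTU.trans (by rw [Subgraph.verts_sup]; exact Set.subset_union_left)
      · intro i h1 h2
        rw [Subgraph.verts_sup]
        rcases Nat.lt_or_ge i (a + k + 1) with h | h
        · exact Or.inl (hmemU i h1 (by omega))
        · have : i = a + k + 1 := by omega
          subst this
          right
          simp
      · rw [Subgraph.verts_sup]
        intro x hx
        rcases hx with hx | hx
        · rcases hUsub hx with h | ⟨i, ⟨hi1, hi2⟩, hieq⟩
          · exact Or.inl h
          · exact Or.inr ⟨i, ⟨hi1, by omega⟩, hieq⟩
        · rw [SimpleGraph.subgraphOfAdj_verts] at hx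
          rcases hx with hx | hx
          · exact Or.inr ⟨a + k, ⟨by omega, by omega⟩, hx.symm⟩
          · exact Or.inr ⟨a + k + 1, ⟨by omega, by omega⟩, hx.symm⟩
      · rw [Subgraph.edgeSet_sup]
        intro e he
        rcases he with he | he
        · rcases hUedge he with h | ⟨i, ⟨hi1, hi2⟩, hieq⟩
          · exact Or.inl h
          · exact Or.inr ⟨i, ⟨hi1, by omega⟩, hieq⟩
        · rw [SimpleGraph.edgeSet_subgraphOfAdj, Set.mem_singleton_iff] at he
          exact Or.inr ⟨a + k, ⟨by omega, by omega⟩, he.symm⟩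



/-- A coloring witnessing rainbow trees for all triples inside `S`, colors `< m`. -/
def GoodC (G : SimpleGraph V) (S : Set V) (m : ℕ) (c : Sym2 V → ℕ) : Prop :=
  ∀ x ∈ S, ∀ y ∈ S, ∀ z ∈ S, ∃ T : G.Subgraph, T.verts ⊆ S ∧ T.Connected ∧ NoCyc T ∧
    x ∈ T.verts ∧ y ∈ T.verts ∧ z ∈ T.verts ∧ Set.InjOn c T.edgeSet ∧
    ∀ e ∈ T.edgeSet, c e < m

def Good (G : SimpleGraph V) (S : Set V) (m : ℕ) : Prop := ∃ c, GoodC G S m c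

lemma base_good (f : ℕ → V) (ℓ : ℕ) (hl : 4 ≤ ℓ) (hfc : f ℓ = f 0)
    (hadj : ∀ i, i < ℓ → G.Adj (f i) (f (i + 1)))
    (hinj : ∀ i j, i < ℓ → j < ℓ → f i = f j → i = j) :
    Good G (f '' {i | i < ℓ}) (ℓ - 2) := by
  classical
  set S := f '' {i | i < ℓ} with hS
  have hmemS : ∀ i, i ≤ ℓ → f i ∈ S := by
    intro i hi
    rcases Nat.lt_or_ge i ℓ with h | h
    · exact ⟨i, h, rfl⟩
    · have hi' : i = ℓ := by omega
      rw [hi', hfc]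
      exact ⟨0, show 0 < ℓ by omega, rfl⟩
  set col : ℕ → ℕ := fun i => if i = ℓ - 2 then 0 else if i = ℓ - 1 then 1 else i with hcol
  have hcol_lt : ∀ i, i < ℓ → col i < ℓ - 2 := by
    intro i hi
    simp only [hcol]
    split_ifs <;> omega
  have hinj2 : ∀ i j, i ≤ ℓ → j ≤ ℓ → f i = f j →
      i = j ∨ (i = 0 ∧ j = ℓ) ∨ (i = ℓ ∧ j = 0) := by
    intro i j hi hj hf
    rcases Nat.lt_or_ge i ℓ with h1 | h1 <;> rcases Nat.lt_or_ge j ℓ with h2 | h2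
    · exact Or.inl (hinj i j h1 h2 hf)
    · have hj' : j = ℓ := by omega
      subst hj'
      rw [hfc] at hf
      have := hinj i 0 h1 (by omega) hf
      omega
    · have hi' : i = ℓ := by omega
      subst hi'
      rw [hfc] at hf
      have := hinj 0 j (by omega) h2 hf
      omega
    · omega
  have hrepr : ∀ i j, i < ℓ → j < ℓ → s(f i, f (i + 1)) = s(f j, f (j + 1)) → i = j := by
    intro i j hi hj he
    rw [Sym2.eq_iff] at he
    rcases he with ⟨h1, h2⟩ | ⟨h1, h2⟩
    · rcases hinj2 i j (by omega) (by omega) h1 with h | h | h <;> omega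
    · rcases hinj2 i (j + 1) (by omega) (by omega) h1 with h | h | h <;>
        rcases hinj2 (i + 1) j (by omega) (by omega) h2 with h' | h' | h' <;> omega
  set cc : Sym2 V → ℕ := fun e =>
    if h : ∃ i, i < ℓ ∧ e = s(f i, f (i + 1)) then col h.choose else 0 with hcc
  have hcspec : ∀ i, i < ℓ → cc s(f i, f (i + 1)) = col i := by
    intro i hi
    have hex : ∃ j, j < ℓ ∧ s(f i, f (i + 1)) = s(f j, f (j + 1)) := ⟨i, hi, rfl⟩
    have h1 : cc s(f i, f (i + 1)) = col hex.choose := by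
      simp only [hcc]
      rw [dif_pos hex]
    rw [h1]
    congr 1
    exact hrepr _ _ hex.choose_spec.1 hi hex.choose_spec.2.symm
  have hinjE : ∀ I : Set ℕ, (∀ i ∈ I, i < ℓ) →
      (∀ i ∈ I, ∀ j ∈ I, col i = col j → i = j) →
      Set.InjOn cc ((fun i => s(f i, f (i + 1))) '' I) := by
    intro I hIl hIinj e1 he1 e2 he2 hce
    obtain ⟨i, hi, rfl⟩ := he1
    obtain ⟨j, hj, rfl⟩ := he2
    rw [hcspec i (hIl i hi), hcspec j (hIl j hj)] at hce
    rw [hIinj i hi j hj hce]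
  have hseg : ∀ aa kk, aa < ℓ → aa + kk ≤ ℓ → (1 ≤ aa ∨ aa + kk < ℓ) →
      ∃ U : G.Subgraph, U.Connected ∧ NoCyc U ∧
        (∀ i, aa ≤ i → i ≤ aa + kk → f i ∈ U.verts) ∧
        U.verts ⊆ S ∧
        U.edgeSet ⊆ (fun i => s(f i, f (i + 1))) '' {i | aa ≤ i ∧ i < aa + kk} := by
    intro aa kk haa hk hor
    have hinj' : ∀ i j, aa ≤ i → i ≤ aa + kk → aa ≤ j → j ≤ aa + kk → f i = f j → i = j := by
      intro i j h1 h2 h3 h4 hf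
      rcases hinj2 i j (by omega) (by omega) hf with h | h | h <;> omega
    obtain ⟨U, h1, h2, _h3, h4, h5, h6⟩ := attach_tree f aa kk
      (fun i hi hik => hadj i (by omega)) hinj'
      (G.singletonSubgraph (f aa)) Subgraph.singletonSubgraph_connected (noCyc_singleton _)
      (by rw [SimpleGraph.singletonSubgraph_verts]; exact Set.mem_singleton _)
      (by
        intro i hi1 hi2 hcmem
        rw [SimpleGraph.singletonSubgraph_verts, Set.mem_singleton_iff] at hcmem
        have := hinj' i aa (by omega) (by omega) le_rfl (by omega) hcmem
        omega)
    refine ⟨U, h1, h2, h4, ?_, ?_⟩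
    · intro x hx
      rcases h5 hx with h | ⟨i, ⟨hi1, hi2⟩, rfl⟩
      · rw [SimpleGraph.singletonSubgraph_verts, Set.mem_singleton_iff] at h
        subst h
        exact hmemS aa (by omega)
      · exact hmemS i (by omega)
    · intro e he
      rcases h6 he with h | h
      · rw [SimpleGraph.edgeSet_singletonSubgraph] at h
        exact absurd h (Set.notMem_empty e)
      · exact h
  -- the seg-based tree package
  have hpack : ∀ aa kk (I : Set ℕ), aa < ℓ → aa + kk ≤ ℓ → (1 ≤ aa ∨ aa + kk < ℓ) →
      I = {i | aa ≤ i ∧ i < aa + kk} →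
      (∀ i ∈ I, ∀ j ∈ I, col i = col j → i = j) →
      ∃ T : G.Subgraph, T.verts ⊆ S ∧ T.Connected ∧ NoCyc T ∧
        (∀ i, aa ≤ i → i ≤ aa + kk → f i ∈ T.verts) ∧ Set.InjOn cc T.edgeSet ∧
        ∀ e ∈ T.edgeSet, cc e < ℓ - 2 := by
    intro aa kk I haa hk hor hI hIcol
    obtain ⟨U, h1, h2, h3, h4, h5⟩ := hseg aa kk haa hk hor
    have hIl : ∀ i ∈ I, i < ℓ := by
      intro i hi
      rw [hI, Set.mem_setOf_eq] at hi
      omega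
    refine ⟨U, h4, h1, h2, h3, ?_, ?_⟩
    · exact (hinjE I hIl hIcol).mono (hI ▸ h5)
    · intro e he
      rcases (hI ▸ h5) he with ⟨i, hi, rfl⟩
      rw [hcspec i (hIl i hi)]
      exact hcol_lt i (hIl i hi)
  -- main aux for sorted triples
  have haux : ∀ a b c2, a ≤ b → b ≤ c2 → c2 < ℓ →
      ∃ T : G.Subgraph, T.verts ⊆ S ∧ T.Connected ∧ NoCyc T ∧
        f a ∈ T.verts ∧ f b ∈ T.verts ∧ f c2 ∈ T.verts ∧ Set.InjOn cc T.edgeSet ∧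
        ∀ e ∈ T.edgeSet, cc e < ℓ - 2 := by
    intro a b c2 hab hbc hc2
    by_cases hA : 1 ≤ a ∨ c2 ≤ ℓ - 2
    · obtain ⟨T, t1, t2, t2', t3, t4, t5⟩ := hpack a (c2 - a) {i | a ≤ i ∧ i < a + (c2 - a)}
        (by omega) (by omega) (by omega) rfl
        (by
          intro i hi j hj hcij
          simp only [Set.mem_setOf_eq] at hi hj
          simp only [hcol] at hcij
          split_ifs at hcij <;> omega)
      exact ⟨T, t1, t2, t2', t3 a le_rfl (by omega), t3 b hab (by omega),
        t3 c2 (by omega) (by omega), t4, t5⟩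
    · push_neg at hA
      obtain ⟨ha0, hc2v⟩ := hA
      have ha0' : a = 0 := by omega
      have hc2' : c2 = ℓ - 1 := by omega
      subst ha0'
      by_cases hB : 2 ≤ b
      · obtain ⟨T, t1, t2, t2', t3, t4, t5⟩ := hpack b (ℓ - b) {i | b ≤ i ∧ i < b + (ℓ - b)}
          (by omega) (by omega) (by omega) rfl
          (by
            intro i hi j hj hcij
            simp only [Set.mem_setOf_eq] at hi hj
            simp only [hcol] at hcij
            split_ifs at hcij <;> omega)
        refine ⟨T, t1, t2, t2', ?_, t3 b le_rfl (by omega), t3 c2 (by omega) (by omega), t4, t5⟩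
        have := t3 ℓ (by omega) (by omega)
        rwa [hfc] at this
      · -- b ≤ 1 : use the path f (ℓ-1), f 0, f 1
        have hadj1 : G.Adj (f (ℓ - 1)) (f 0) := by
          have := hadj (ℓ - 1) (by omega)
          have heq : ℓ - 1 + 1 = ℓ := by omega
          rw [heq, hfc] at this
          exact this
        have hadj2 : G.Adj (f 0) (f 1) := by
          have := hadj 0 (by omega)
          simpa using this
        have hne10 : f 0 ∉ (G.singletonSubgraph (f (ℓ - 1))).verts := by
          rw [SimpleGraph.singletonSubgraph_verts, Set.mem_singleton_iff]
          intro h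
          have := hinj 0 (ℓ - 1) (by omega) (by omega) h
          omega
        obtain ⟨hU1c, hU1n⟩ := pendant_step Subgraph.singletonSubgraph_connected
          (noCyc_singleton (f (ℓ - 1))) hadj1 (Set.mem_singleton _) hne10
        set U1 := G.singletonSubgraph (f (ℓ - 1)) ⊔ G.subgraphOfAdj hadj1 with hU1
        have hU1verts : U1.verts = {f (ℓ - 1), f 0} := by
          rw [hU1, Subgraph.verts_sup, SimpleGraph.singletonSubgraph_verts,
            SimpleGraph.subgraphOfAdj_verts]
          ext x
          simp only [Set.mem_union, Set.mem_singleton_iff, Set.mem_insert_iff]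
          tauto
        have hne2 : f 1 ∉ U1.verts := by
          rw [hU1verts]
          intro h
          rcases h with h | h
          · have := hinj 1 (ℓ - 1) (by omega) (by omega) h
            omega
          · have := hinj 1 0 (by omega) (by omega) h
            omega
        have hmem0 : f 0 ∈ U1.verts := by rw [hU1verts]; exact Or.inr rfl
        obtain ⟨hU2c, hU2n⟩ := pendant_step hU1c hU1n hadj2 hmem0 hne2
        set U2 := U1 ⊔ G.subgraphOfAdj hadj2 with hU2def
        have hU2verts : U2.verts = {f (ℓ - 1), f 0, f 1} := by
          rw [hU2def, Subgraph.verts_sup, hU1verts, SimpleGraph.subgraphOfAdj_verts]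
          ext x
          simp only [Set.mem_union, Set.mem_insert_iff, Set.mem_singleton_iff]
          tauto
        have hE1 : cc s(f (ℓ - 1), f 0) = 1 := by
          have heq : ℓ - 1 + 1 = ℓ := by omega
          have := hcspec (ℓ - 1) (by omega)
          rw [heq, hfc] at this
          rw [this]
          simp only [hcol]
          split_ifs <;> omega
        have hE2 : cc s(f 0, f 1) = 0 := by
          have := hcspec 0 (by omega)
          rw [this]
          simp only [hcol]
          split_ifs <;> omega
        have hU2edges : U2.edgeSet ⊆ {s(f (ℓ - 1), f 0), s(f 0, f 1)} := by
          rw [hU2def, Subgraph.edgeSet_sup, hU1, Subgraph.edgeSet_sup]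
          intro e he
          rcases he with (he | he) | he
          · rw [SimpleGraph.edgeSet_singletonSubgraph] at he
            exact absurd he (Set.notMem_empty e)
          · rw [SimpleGraph.edgeSet_subgraphOfAdj, Set.mem_singleton_iff] at he
            exact Or.inl he
          · rw [SimpleGraph.edgeSet_subgraphOfAdj, Set.mem_singleton_iff] at he
            exact Or.inr he
        refine ⟨U2, ?_, hU2c, hU2n, ?_, ?_, ?_, ?_, ?_⟩
        · rw [hU2verts]
          intro x hx
          rcases hx with h | h | h
          · subst h; exact hmemS (ℓ - 1) (by omega)
          · subst h; exact hmemS 0 (by omega)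
          · subst h; exact hmemS 1 (by omega)
        · rw [hU2verts]; exact Or.inr (Or.inl rfl)
        · rw [hU2verts]
          interval_cases b
          · exact Or.inr (Or.inl rfl)
          · exact Or.inr (Or.inr rfl)
        · rw [hU2verts, hc2']; exact Or.inl rfl
        · intro e1 he1 e2 he2 hce
          have h1 : e1 = s(f (ℓ - 1), f 0) ∨ e1 = s(f 0, f 1) := by
            simpa using hU2edges he1
          have h2 : e2 = s(f (ℓ - 1), f 0) ∨ e2 = s(f 0, f 1) := by
            simpa using hU2edges he2
          rcases h1 with rfl | rfl <;> rcases h2 with rfl | rfl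
          · rfl
          · rw [hE1, hE2] at hce; omega
          · rw [hE1, hE2] at hce; omega
          · rfl
        · intro e he
          have h : e = s(f (ℓ - 1), f 0) ∨ e = s(f 0, f 1) := by
            simpa using hU2edges he
          rcases h with rfl | rfl
          · rw [hE1]; omega
          · rw [hE2]; omega
  -- assemble: arbitrary triples by sorting
  refine ⟨cc, ?_⟩
  intro x hx y hy z hz
  obtain ⟨a, ha, rfl⟩ := hx
  obtain ⟨b, hb, rfl⟩ := hy
  obtain ⟨c2, hc2, rfl⟩ := hz
  simp only [Set.mem_setOf_eq] at ha hb hc2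
  rcases le_total a b with h1 | h1 <;> rcases le_total b c2 with h2 | h2 <;>
    rcases le_total a c2 with h3 | h3
  · obtain ⟨T, t1, t2, t2', t3, t4, t5, t6, t7⟩ := haux a b c2 h1 h2 hc2
    exact ⟨T, t1, t2, t2', t3, t4, t5, t6, t7⟩
  · obtain ⟨T, t1, t2, t2', t3, t4, t5, t6, t7⟩ := haux a b c2 h1 h2 hc2
    exact ⟨T, t1, t2, t2', t3, t4, t5, t6, t7⟩
  · obtain ⟨T, t1, t2, t2', t3, t4, t5, t6, t7⟩ := haux a c2 b h3 h2 hb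
    exact ⟨T, t1, t2, t2', t3, t5, t4, t6, t7⟩
  · obtain ⟨T, t1, t2, t2', t3, t4, t5, t6, t7⟩ := haux c2 a b h3 h1 hb
    exact ⟨T, t1, t2, t2', t4, t5, t3, t6, t7⟩
  · obtain ⟨T, t1, t2, t2', t3, t4, t5, t6, t7⟩ := haux b a c2 h1 h3 hc2
    exact ⟨T, t1, t2, t2', t4, t3, t5, t6, t7⟩
  · obtain ⟨T, t1, t2, t2', t3, t4, t5, t6, t7⟩ := haux b c2 a h2 h3 ha
    exact ⟨T, t1, t2, t2', t5, t3, t4, t6, t7⟩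
  · obtain ⟨T, t1, t2, t2', t3, t4, t5, t6, t7⟩ := haux c2 b a h2 h1 ha
    exact ⟨T, t1, t2, t2', t5, t4, t3, t6, t7⟩
  · obtain ⟨T, t1, t2, t2', t3, t4, t5, t6, t7⟩ := haux c2 b a h2 h1 ha
    exact ⟨T, t1, t2, t2', t5, t4, t3, t6, t7⟩



lemma crossing_of_walk {S : Set V} : ∀ {u v : V} (p : G.Walk u v), u ∈ S → v ∉ S →
    ∃ a b, a ∈ S ∧ b ∉ S ∧ G.Adj a b := by
  intro u v p
  induction p with
  | nil => intro h1 h2; exact absurd h1 h2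
  | @cons x y z h q ih =>
      intro h1 h2
      by_cases hy : y ∈ S
      · exact ih hy h2
      · exact ⟨x, y, h1, hy, h⟩

lemma first_hit {S : Set V} : ∀ {y z : V} (p : G.Walk y z), p.IsPath → y ∉ S → z ∈ S →
    ∃ (u : V) (q : G.Walk y u), q.IsPath ∧ u ∈ S ∧
      (∀ w ∈ q.support, w ∈ p.support) ∧ (∀ w ∈ q.support, w ≠ u → w ∉ S) := by
  intro y z p
  induction p with
  | nil => intro _ h1 h2; exact absurd h2 h1
  | @cons x y' z h q ih =>
      intro hp h1 h2
      by_cases hy : y' ∈ S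
      · refine ⟨y', Walk.cons h Walk.nil, ?_, hy, ?_, ?_⟩
        · rw [Walk.cons_isPath_iff]
          exact ⟨Walk.IsPath.nil, by simp [h.ne]⟩
        · intro w hw
          simp only [Walk.support_cons, Walk.support_nil, List.mem_cons,
            List.not_mem_nil, or_false] at hw
          rw [Walk.support_cons, List.mem_cons]
          rcases hw with rfl | rfl
          · exact Or.inl rfl
          · exact Or.inr q.start_mem_support
        · intro w hw hne
          simp only [Walk.support_cons, Walk.support_nil, List.mem_cons,
            List.not_mem_nil, or_false] at hw
          rcases hw with rfl | rfl
          · exact h1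
          · exact absurd rfl hne
      · rw [Walk.cons_isPath_iff] at hp
        obtain ⟨u, q', hq1, hq2, hq3, hq4⟩ := ih hp.1 hy h2
        refine ⟨u, Walk.cons h q', ?_, hq2, ?_, ?_⟩
        · rw [Walk.cons_isPath_iff]
          exact ⟨hq1, fun hc => hp.2 (hq3 x hc)⟩
        · intro w hw
          rw [Walk.support_cons, List.mem_cons] at hw ⊢
          rcases hw with rfl | hw
          · exact Or.inl rfl
          · exact Or.inr (hq3 w hw)
        · intro w hw hne
          rw [Walk.support_cons, List.mem_cons] at hw
          rcases hw with rfl | hw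
          · exact h1
          · exact hq4 w hw hne

lemma adj_of_connected {W : Type*} {H : SimpleGraph W} (hc : H.Connected) {v w : W}
    (hne : v ≠ w) : ∃ u, H.Adj v u := by
  obtain ⟨p⟩ := hc.preconnected v w
  cases p with
  | nil => exact absurd rfl hne
  | cons h q => exact ⟨_, h⟩

lemma exists_ear (hconn : G.Connected)
    (hcut : ∀ v : V, (G.induce ({v}ᶜ : Set V)).Connected)
    {S : Set V} (hS2 : ∀ t : V, ∃ z, z ∈ S ∧ z ≠ t) (hproper : S ≠ Set.univ) :
    ∃ (x u : V) (r : G.Walk x u), r.IsPath ∧ 2 ≤ r.length ∧ x ∈ S ∧ u ∈ S ∧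
      ∀ i, 1 ≤ i → i < r.length → r.getVert i ∉ S := by
  classical
  have hV : Nonempty V := by
    by_contra h
    exact hproper (Set.eq_univ_iff_forall.mpr fun x => absurd ⟨x⟩ h)
  have hSne : S.Nonempty := by
    obtain ⟨z, hz, _⟩ := hS2 (Classical.arbitrary V)
    exact ⟨z, hz⟩
  obtain ⟨a, b, haS, hbS, hab⟩ : ∃ a b, a ∈ S ∧ b ∉ S ∧ G.Adj a b := by
    obtain ⟨v, hv⟩ : ∃ v, v ∉ S := by
      by_contra h
      push_neg at h
      exact hproper (Set.eq_univ_iff_forall.mpr h)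
    obtain ⟨u0, hu0⟩ := hSne
    obtain ⟨p⟩ := hconn.preconnected u0 v
    exact crossing_of_walk p hu0 hv
  obtain ⟨z0, hz0S, hz0a⟩ := hS2 a
  have hba : b ≠ a := fun h => hbS (h ▸ haS)
  have hbmem : b ∈ ({a}ᶜ : Set V) := hba
  have hzmem : z0 ∈ ({a}ᶜ : Set V) := hz0a
  obtain ⟨p0⟩ := (hcut a).preconnected ⟨b, hbmem⟩ ⟨z0, hzmem⟩
  set w1 : G.Walk b z0 :=
    p0.map (SimpleGraph.Embedding.induce ({a}ᶜ : Set V)).toHom with hw1def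
  have hw1sup : ∀ t ∈ w1.support, t ≠ a := by
    intro t ht
    replace ht : t ∈ (p0.map (SimpleGraph.Embedding.induce ({a}ᶜ : Set V)).toHom).support := ht
    rw [Walk.support_map] at ht
    obtain ⟨t0, _, rfl⟩ := List.mem_map.mp ht
    exact t0.2
  have hp1 : (w1.toPath : G.Walk b z0).IsPath := w1.toPath.2
  have hp1sup : ∀ t ∈ (w1.toPath : G.Walk b z0).support, t ≠ a := fun t ht =>
    hw1sup t (w1.support_toPath_subset ht)
  obtain ⟨u, q, hq1, hq2, hq3, hq4⟩ := first_hit (w1.toPath : G.Walk b z0) hp1 hbS hz0S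
  have haq : a ∉ q.support := fun hc => hp1sup a (hq3 a hc) rfl
  refine ⟨a, u, Walk.cons hab q, ?_, ?_, haS, hq2, ?_⟩
  · rw [Walk.cons_isPath_iff]
    exact ⟨hq1, haq⟩
  · rw [Walk.length_cons]
    rcases Nat.eq_zero_or_pos q.length with h0 | h0
    · exact absurd (Walk.eq_of_length_eq_zero h0 ▸ hq2) hbS
    · omega
  · intro i hi1 hi2
    rw [Walk.length_cons] at hi2
    rw [Walk.getVert_cons q hab (by omega)]
    have hmem : q.getVert (i - 1) ∈ q.support := by
      rw [Walk.mem_support_iff_exists_getVert]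
      exact ⟨i - 1, rfl, by omega⟩
    apply hq4 _ hmem
    intro hequ
    have := isPath_getVert_injOn hq1 (i - 1) (by omega) q.length le_rfl
      (by rw [hequ, Walk.getVert_length])
    omega

lemma grow (hconn : G.Connected)
    (hcut : ∀ v : V, (G.induce ({v}ᶜ : Set V)).Connected)
    {S : Set V} {m : ℕ} (hgood : Good G S m) (hSfin : S.Finite) (hS2 : 2 ≤ S.ncard)
    (hproper : S ≠ Set.univ) :
    ∃ (S' : Set V) (k : ℕ), 1 ≤ k ∧ S ⊆ S' ∧ S'.ncard = S.ncard + k ∧ Good G S' (m + k) := by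
  classical
  obtain ⟨c, hc⟩ := hgood
  have hS2' : ∀ t : V, ∃ z, z ∈ S ∧ z ≠ t := fun t =>
    Set.exists_ne_of_one_lt_ncard (by omega) t
  obtain ⟨x, u, r, hrpath, hrlen, hxS, huS, hint⟩ := exists_ear hconn hcut hS2' hproper
  set k := r.length - 1 with hkdef
  set F := r.getVert with hFdef
  have hk1 : 1 ≤ k := by omega
  have hklen : k + 1 = r.length := by omega
  have hFinj : ∀ i j, i ≤ k + 1 → j ≤ k + 1 → F i = F j → i = j := by
    intro i j hi hj hf
    exact isPath_getVert_injOn hrpath i (by omega) j (by omega) hf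
  have hF0 : F 0 = x := r.getVert_zero
  have hFlast : F (k + 1) = u := by rw [hFdef, hklen, r.getVert_length]
  have hFadj : ∀ i, i ≤ k → G.Adj (F i) (F (i + 1)) := fun i hi =>
    r.adj_getVert_succ (by omega)
  have hFnotS : ∀ i, 1 ≤ i → i ≤ k → F i ∉ S := fun i h1 h2 => hint i h1 (by omega)
  set S' := S ∪ F '' {i | 1 ≤ i ∧ i ≤ k} with hS'def
  have hIset : {i | 1 ≤ i ∧ i ≤ k} = ↑(Finset.Icc 1 k) := by
    ext i; simp [Finset.mem_Icc]
  have hcard : S'.ncard = S.ncard + k := by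
    rw [hS'def, Set.ncard_union_eq ?dis hSfin ?fin]
    · congr 1
      rw [Set.ncard_image_of_injOn (fun i hi j hj hf => hFinj i j (by
          simp only [Set.mem_setOf_eq] at hi; omega) (by
          simp only [Set.mem_setOf_eq] at hj; omega) hf)]
      rw [hIset, Set.ncard_coe_finset]
      simp
    case dis =>
      rw [Set.disjoint_right]
      rintro w ⟨i, ⟨hi1, hi2⟩, rfl⟩
      exact hFnotS i hi1 hi2
    case fin =>
      exact Set.Finite.image _ (by rw [hIset]; exact (Finset.Icc 1 k).finite_toSet)
  have hrepr : ∀ i j, i ≤ k → j ≤ k → s(F i, F (i + 1)) = s(F j, F (j + 1)) → i = j := by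
    intro i j hi hj he
    rw [Sym2.eq_iff] at he
    rcases he with ⟨h1, h2⟩ | ⟨h1, h2⟩
    · exact hFinj i j (by omega) (by omega) h1
    · have e1 := hFinj i (j + 1) (by omega) (by omega) h1
      have e2 := hFinj (i + 1) j (by omega) (by omega) h2
      omega
  set cc : Sym2 V → ℕ := fun e =>
    if h : ∃ i, i ≤ k ∧ e = s(F i, F (i + 1)) then (if h.choose = k then 0 else m + h.choose)
    else c e with hccdef
  have hcspec : ∀ i, i ≤ k → cc s(F i, F (i + 1)) = if i = k then 0 else m + i := by
    intro i hi
    have hex : ∃ j, j ≤ k ∧ s(F i, F (i + 1)) = s(F j, F (j + 1)) := ⟨i, hi, rfl⟩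
    have hch : hex.choose = i := hrepr _ _ hex.choose_spec.1 hi hex.choose_spec.2.symm
    have h1 : cc s(F i, F (i + 1)) = if hex.choose = k then 0 else m + hex.choose := by
      simp only [hccdef]
      rw [dif_pos hex]
    rw [h1, hch]
  have hcold : ∀ e, (∀ w, w ∈ e → w ∈ S) → cc e = c e := by
    intro e hw
    simp only [hccdef]
    rw [dif_neg]
    rintro ⟨i, hik, rfl⟩
    rcases Nat.eq_zero_or_pos i with h0 | h0
    · subst h0
      exact hFnotS 1 le_rfl (by omega) (hw (F 1) (Sym2.mem_mk_right _ _))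
    · exact hFnotS i h0 hik (hw (F i) (Sym2.mem_mk_left _ _))
  have hcoldT : ∀ (T : G.Subgraph), T.verts ⊆ S → ∀ e ∈ T.edgeSet, cc e = c e := by
    intro T hTs e he
    apply hcold
    intro w hwe
    induction e using Sym2.ind with
    | _ p1 p2 =>
        rw [Subgraph.mem_edgeSet] at he
        rcases Sym2.mem_iff.mp hwe with rfl | rfl
        · exact hTs he.fst_mem
        · exact hTs he.snd_mem
  refine ⟨S', k, hk1, Set.subset_union_left, hcard, cc, ?_⟩
  intro x1 hx1 y1 hy1 z1 hz1
  have hnew : ∀ w, w ∈ S' → w ∉ S → ∃ i, 1 ≤ i ∧ i ≤ k ∧ F i = w := by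
    intro w hw hwS
    rcases hw with hw | ⟨i, ⟨hi1, hi2⟩, rfl⟩
    · exact absurd hw hwS
    · exact ⟨i, hi1, hi2, rfl⟩
  by_cases hall : x1 ∈ S ∧ y1 ∈ S ∧ z1 ∈ S
  · obtain ⟨T, t1, t2, t3, t4, t5, t6, t7, t8⟩ := hc x1 hall.1 y1 hall.2.1 z1 hall.2.2
    refine ⟨T, t1.trans Set.subset_union_left, t2, t3, t4, t5, t6, ?_, ?_⟩
    · intro e1 he1 e2 he2 heq
      rw [hcoldT T t1 e1 he1, hcoldT T t1 e2 he2] at heq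
      exact t7 he1 he2 heq
    · intro e he
      rw [hcoldT T t1 e he]
      have := t8 e he
      omega
  · -- at least one coordinate is new
    set J := (Finset.Icc 1 k).filter (fun i => F i = x1 ∨ F i = y1 ∨ F i = z1) with hJdef
    have hJne : J.Nonempty := by
      rcases not_and_or.mp hall with h | h
      · obtain ⟨i, h1, h2, h3⟩ := hnew x1 hx1 h
        exact ⟨i, by simp [hJdef, Finset.mem_Icc, h1, h2, h3]⟩
      rcases not_and_or.mp h with h' | h'
      · obtain ⟨i, h1, h2, h3⟩ := hnew y1 hy1 h'
        exact ⟨i, by simp [hJdef, Finset.mem_Icc, h1, h2, h3]⟩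
      · obtain ⟨i, h1, h2, h3⟩ := hnew z1 hz1 h'
        exact ⟨i, by simp [hJdef, Finset.mem_Icc, h1, h2, h3]⟩
    set j := J.max' hJne with hjdef
    have hjmem : j ∈ J := J.max'_mem hJne
    have hjk : 1 ≤ j ∧ j ≤ k := by
      have := Finset.mem_filter.mp hjmem
      exact Finset.mem_Icc.mp this.1
    have hjmax : ∀ i ∈ J, i ≤ j := fun i hi => J.le_max' i hi
    -- projections
    have hproj : ∀ w, w ∈ S' → ∃ w', w' ∈ S ∧ (w ∈ S → w' = w) ∧ (w ∉ S → w' = F 0) := by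
      intro w hw
      by_cases hwS : w ∈ S
      · exact ⟨w, hwS, fun _ => rfl, fun hcon => absurd hwS hcon⟩
      · exact ⟨F 0, hF0 ▸ hxS, fun hcon => absurd hcon hwS, fun _ => rfl⟩
    obtain ⟨x', hx'S, hx'1, hx'2⟩ := hproj x1 hx1
    obtain ⟨y', hy'S, hy'1, hy'2⟩ := hproj y1 hy1
    obtain ⟨z', hz'S, hz'1, hz'2⟩ := hproj z1 hz1
    obtain ⟨T0, t1, t2, t3, t4, t5, t6, t7, t8⟩ := hc x' hx'S y' hy'S z' hz'S
    have hF0T : F 0 ∈ T0.verts := by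
      rcases not_and_or.mp hall with h | h
      · rw [← hx'2 h]; exact t4
      rcases not_and_or.mp h with h' | h'
      · rw [← hy'2 h']; exact t5
      · rw [← hz'2 h']; exact t6
    obtain ⟨U, hUc, hUn, hTU, hmemU, hUsub, hUedge⟩ := attach_tree F 0 j
      (fun i hi hik => hFadj i (by omega))
      (fun i1 j1 a1 a2 a3 a4 hf => hFinj i1 j1 (by omega) (by omega) hf)
      T0 t2 t3 hF0T
      (fun i h1 h2 => fun hcon => hFnotS i (by omega) (by omega) (t1 hcon))
    have hUS' : U.verts ⊆ S' := by
      intro w hw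
      rcases hUsub hw with h | ⟨i, ⟨hi1, hi2⟩, rfl⟩
      · exact Or.inl (t1 h)
      · rcases Nat.eq_zero_or_pos i with h0 | h0
        · subst h0
          rw [hF0]
          exact Or.inl hxS
        · exact Or.inr ⟨i, ⟨h0, by omega⟩, rfl⟩
    have hmemtriple : ∀ w, w ∈ S' → (F 0 = x' ∨ w ∈ S) →
        (w = x1 ∨ w = y1 ∨ w = z1) → True := fun _ _ _ _ => trivial
    -- membership of the original triple
    have hmemw : ∀ w w'', w ∈ S' → w'' ∈ T0.verts → (w ∈ S → w'' = w) →
        (w = x1 ∨ w = y1 ∨ w = z1) → w ∈ U.verts := by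
      intro w w'' hw hw'' hweq htrip
      by_cases hwS : w ∈ S
      · rw [← hweq hwS]
        exact hTU hw''
      · obtain ⟨i, h1, h2, h3⟩ := hnew w hw hwS
        have hiJ : i ∈ J := by
          rw [hJdef, Finset.mem_filter, Finset.mem_Icc]
          refine ⟨⟨h1, h2⟩, ?_⟩
          rw [h3]
          exact htrip
        rw [← h3]
        exact hmemU i (by omega) (by have := hjmax i hiJ; omega)
    refine ⟨U, hUS', hUc, hUn, ?_, ?_, ?_, ?_, ?_⟩
    · exact hmemw x1 x' hx1 t4 (fun h => hx'1 h) (Or.inl rfl)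
    · exact hmemw y1 y' hy1 t5 (fun h => hy'1 h) (Or.inr (Or.inl rfl))
    · exact hmemw z1 z' hz1 t6 (fun h => hz'1 h) (Or.inr (Or.inr rfl))
    · -- injectivity of cc on U.edgeSet
      intro e1 he1 e2 he2 heq
      have hval : ∀ e ∈ U.edgeSet, (e ∈ T0.edgeSet ∧ cc e = c e ∧ cc e < m) ∨
          (∃ i, i < j ∧ e = s(F i, F (i + 1)) ∧ cc e = m + i) := by
        intro e he
        rcases hUedge he with h | ⟨i, hi, rfl⟩
        · exact Or.inl ⟨h, hcoldT T0 t1 e h, by rw [hcoldT T0 t1 e h]; exact t8 e h⟩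
        · simp only [Set.mem_setOf_eq] at hi
          refine Or.inr ⟨i, by omega, rfl, ?_⟩
          rw [hcspec i (by omega)]
          rw [if_neg (by omega)]
      rcases hval e1 he1 with ⟨hT1, hc1, hb1⟩ | ⟨i1, hi1, rfl, hv1⟩ <;>
        rcases hval e2 he2 with ⟨hT2, hc2, hb2⟩ | ⟨i2, hi2, rfl, hv2⟩
      · exact t7 hT1 hT2 (by rw [← hc1, ← hc2]; exact heq)
      · rw [hc1, hv2] at heq
        have := t8 e1 hT1
        omega
      · rw [hv1, hc2] at heq
        have := t8 e2 hT2
        omega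
      · rw [hv1, hv2] at heq
        have : i1 = i2 := by omega
        rw [this]
    · intro e he
      rcases hUedge he with h | ⟨i, hi, rfl⟩
      · rw [hcoldT T0 t1 e h]
        have := t8 e h
        omega
      · simp only [Set.mem_setOf_eq] at hi
        rw [hcspec i (by omega), if_neg (by omega)]
        omega



lemma exists_cycleFun [Fintype V] (hconn : G.Connected)
    (hcut : ∀ v : V, (G.induce ({v}ᶜ : Set V)).Connected) (hn : 4 ≤ Fintype.card V) :
    ∃ (f : ℕ → V) (ℓ : ℕ), 3 ≤ ℓ ∧ f ℓ = f 0 ∧ (∀ i, i < ℓ → G.Adj (f i) (f (i + 1))) ∧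
      ∀ i j, i < ℓ → j < ℓ → f i = f j → i = j := by
  classical
  have hVne : Nonempty V := Fintype.card_pos_iff.mp (by omega)
  obtain ⟨v⟩ := hVne
  obtain ⟨w, hw⟩ := Fintype.exists_ne_of_one_lt_card (by omega) v
  obtain ⟨a, hva⟩ := adj_of_connected hconn (Ne.symm hw)
  have hvamem : v ∈ ({a}ᶜ : Set V) := hva.ne
  obtain ⟨t, ht⟩ : ∃ t : ({a}ᶜ : Set V), t ≠ (⟨v, hvamem⟩ : ({a}ᶜ : Set V)) := by
    obtain ⟨t0, ht0⟩ : (Finset.univ \ {a, v} : Finset V).Nonempty := by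
      apply Finset.card_pos.mp
      rw [Finset.card_sdiff_of_subset (Finset.subset_univ _)]
      have hle : ({a, v} : Finset V).card ≤ 2 := by
        apply le_trans (Finset.card_insert_le _ _)
        simp
      have := Finset.card_univ (α := V)
      omega
    rw [Finset.mem_sdiff, Finset.mem_insert, Finset.mem_singleton] at ht0
    push_neg at ht0
    refine ⟨⟨t0, ht0.2.1⟩, fun h => ht0.2.2 ?_⟩
    exact congrArg Subtype.val h
  obtain ⟨b', hvb'⟩ := adj_of_connected (hcut a) (Ne.symm ht)
  have hvb : G.Adj v (b' : V) := hvb'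
  set b : V := (b' : V) with hbdef
  have hba : b ≠ a := b'.2
  have hamem : a ∈ ({v}ᶜ : Set V) := hva.ne'
  have hbmem : b ∈ ({v}ᶜ : Set V) := hvb.ne'
  obtain ⟨p0⟩ := (hcut v).preconnected ⟨a, hamem⟩ ⟨b, hbmem⟩
  set w1 : G.Walk a b := p0.map (SimpleGraph.Embedding.induce ({v}ᶜ : Set V)).toHom with hw1def
  have hw1sup : ∀ s ∈ w1.support, s ≠ v := by
    intro s hs
    replace hs : s ∈ (p0.map (SimpleGraph.Embedding.induce ({v}ᶜ : Set V)).toHom).support := hs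
    rw [Walk.support_map] at hs
    obtain ⟨s0, _, rfl⟩ := List.mem_map.mp hs
    exact s0.2
  set p : G.Walk a b := (w1.toPath : G.Walk a b) with hpdef
  have hp : p.IsPath := w1.toPath.2
  have hpsup : ∀ s ∈ p.support, s ≠ v := fun s hs => hw1sup s (w1.support_toPath_subset hs)
  have hab : a ≠ b := fun h => hba h.symm
  have hlen : 1 ≤ p.length := by
    rcases Nat.eq_zero_or_pos p.length with h0 | h0
    · exact absurd (Walk.eq_of_length_eq_zero h0) hab
    · exact h0
  set ℓ := p.length + 2 with hldef
  have hl3 : 3 ≤ ℓ := by omega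
  refine ⟨fun i => if i = 0 ∨ i = ℓ then v else p.getVert (i - 1), ℓ, hl3, ?_, ?_, ?_⟩
  · simp
  · intro i hi
    dsimp only
    by_cases h0 : i = 0
    · subst h0
      simp only [eq_self_iff_true, true_or, if_true]
      rw [if_neg (by omega)]
      have : p.getVert (1 - 1) = a := p.getVert_zero
      rw [this]
      exact hva
    · by_cases h1 : i = ℓ - 1
      · have hig : i + 1 = ℓ := by omega
        rw [if_neg (by omega), if_pos (Or.inr hig)]
        have : i - 1 = p.length := by omega
        rw [this, p.getVert_length]
        exact hvb.symm
      · rw [if_neg (by omega), if_neg (by omega)]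
        have h2 : i - 1 + 1 = i := by omega
        have := p.adj_getVert_succ (i := i - 1) (by omega)
        rwa [h2] at this
  · intro i j hi hj hf
    dsimp only at hf
    by_cases h0 : i = 0 <;> by_cases h0' : j = 0
    · omega
    · exfalso
      rw [if_pos (Or.inl h0), if_neg (by omega)] at hf
      refine hpsup (p.getVert (j - 1)) ?_ hf.symm
      rw [Walk.mem_support_iff_exists_getVert]
      exact ⟨j - 1, rfl, by omega⟩
    · exfalso
      rw [if_neg (by omega), if_pos (Or.inl h0')] at hf
      refine hpsup (p.getVert (i - 1)) ?_ hf
      rw [Walk.mem_support_iff_exists_getVert]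
      exact ⟨i - 1, rfl, by omega⟩
    · rw [if_neg (by omega), if_neg (by omega)] at hf
      have := isPath_getVert_injOn hp (i - 1) (by omega) (j - 1) (by omega) hf
      omega

lemma exists_cycleFun4 [Fintype V] (hconn : G.Connected)
    (hcut : ∀ v : V, (G.induce ({v}ᶜ : Set V)).Connected) (hn : 4 ≤ Fintype.card V) :
    ∃ (f : ℕ → V) (ℓ : ℕ), 4 ≤ ℓ ∧ f ℓ = f 0 ∧ (∀ i, i < ℓ → G.Adj (f i) (f (i + 1))) ∧
      ∀ i j, i < ℓ → j < ℓ → f i = f j → i = j := by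
  classical
  obtain ⟨f, ℓ, h3, hfc, hadj, hinj⟩ := exists_cycleFun hconn hcut hn
  rcases Nat.lt_or_ge ℓ 4 with hl | hl
  swap
  · exact ⟨f, ℓ, hl, hfc, hadj, hinj⟩
  have h33 : ℓ = 3 := by omega
  subst h33
  have h20 : G.Adj (f 2) (f 0) := by
    have := hadj 2 (by omega)
    rw [show (2 : ℕ) + 1 = 3 by norm_num, hfc] at this
    exact this
  have htriadj : ∀ i j, i < 3 → j < 3 → f i ≠ f j → G.Adj (f i) (f j) := by
    intro i j hi hj hne
    have hij : i ≠ j := fun h => hne (by rw [h])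
    interval_cases i <;> interval_cases j
    · exact absurd rfl hij
    · exact hadj 0 (by omega)
    · exact h20.symm
    · exact (hadj 0 (by omega)).symm
    · exact absurd rfl hij
    · exact hadj 1 (by omega)
    · exact h20
    · exact (hadj 1 (by omega)).symm
    · exact absurd rfl hij
  set S3 := f '' {i | i < 3} with hS3
  have hS3mem : ∀ i, i < 3 → f i ∈ S3 := fun i hi => ⟨i, hi, rfl⟩
  have hS2' : ∀ t : V, ∃ z, z ∈ S3 ∧ z ≠ t := by
    intro t
    by_cases h0 : f 0 = t
    · refine ⟨f 1, hS3mem 1 (by omega), fun h => ?_⟩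
      have := hinj 1 0 (by omega) (by omega) (h.trans h0.symm)
      omega
    · exact ⟨f 0, hS3mem 0 (by omega), h0⟩
  have hproper : S3 ≠ Set.univ := by
    intro h
    have hfin : ({i | i < 3} : Set ℕ).Finite := by
      rw [show {i | i < 3} = ↑(Finset.range 3) by ext; simp]
      exact (Finset.range 3).finite_toSet
    have h1 : S3.ncard ≤ 3 := by
      rw [hS3]
      have h2 := Set.ncard_image_le (s := {i | i < 3}) (f := f) hfin
      have h4 : ({i | i < 3} : Set ℕ).ncard = 3 := by
        rw [show ({i | i < 3} : Set ℕ) = ↑(Finset.range 3) by ext; simp,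
          Set.ncard_coe_finset, Finset.card_range]
      omega
    have h5 := congrArg Set.ncard h
    rw [Set.ncard_univ, Nat.card_eq_fintype_card] at h5
    omega
  obtain ⟨x, u, r, hrpath, hrlen, hxS, huS, hint⟩ := exists_ear hconn hcut hS2' hproper
  have hxu : x ≠ u := by
    intro h
    have := isPath_getVert_injOn hrpath 0 (by omega) r.length le_rfl
      (r.getVert_zero.trans (h.trans r.getVert_length.symm))
    omega
  rcases Nat.lt_or_ge r.length 3 with hr3 | hr3
  · -- r.length = 2 : build an explicit 4-cycle
    have hr2 : r.length = 2 := by omega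
    obtain ⟨ix, hix, hxeq⟩ := id hxS
    obtain ⟨iu, hiu, hueq⟩ := id huS
    simp only [Set.mem_setOf_eq] at hix hiu
    have hixiu : ix ≠ iu := fun h => hxu (by rw [← hxeq, ← hueq, h])
    set iz := 3 - ix - iu with hizdef
    have hizlt : iz < 3 ∧ iz ≠ ix ∧ iz ≠ iu := by omega
    set mq := r.getVert 1 with hmdef
    have hmnotS : mq ∉ S3 := hint 1 le_rfl (by omega)
    have hmx : mq ≠ x := fun h => hmnotS (by rw [h]; exact hxS)
    have hmu : mq ≠ u := fun h => hmnotS (by rw [h]; exact huS)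
    have hmz : mq ≠ f iz := fun h => hmnotS (by rw [h]; exact hS3mem iz (by omega))
    have hxz : x ≠ f iz := by
      rw [← hxeq]
      intro h
      exact hizlt.2.1 (hinj ix iz hix hizlt.1 h).symm
    have huz : u ≠ f iz := by
      rw [← hueq]
      intro h
      exact hizlt.2.2 (hinj iu iz hiu hizlt.1 h).symm
    have ha1 : G.Adj x mq := by
      have := r.adj_getVert_succ (show 0 < r.length by omega)
      rwa [r.getVert_zero] at this
    have hgv2 : r.getVert 2 = u := by rw [← hr2]; exact r.getVert_length
    have ha2 : G.Adj mq u := by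
      have := r.adj_getVert_succ (show 1 < r.length by omega)
      rwa [show (1 : ℕ) + 1 = 2 by norm_num, hgv2] at this
    have ha3 : G.Adj u (f iz) := by
      rw [← hueq]
      exact htriadj iu iz hiu hizlt.1 (by rw [hueq]; exact huz)
    have ha4 : G.Adj (f iz) x := by
      rw [← hxeq]
      exact (htriadj ix iz hix hizlt.1 (by rw [hxeq]; exact hxz)).symm
    refine ⟨fun i => if i % 4 = 0 then x else if i % 4 = 1 then mq
      else if i % 4 = 2 then u else f iz, 4, le_rfl, by norm_num, ?_, ?_⟩
    · intro i hi
      interval_cases i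
      · simpa using ha1
      · simpa using ha2
      · simpa using ha3
      · simpa using ha4
    · intro i j hi hj hf
      dsimp only at hf
      interval_cases i <;> interval_cases j <;> norm_num at hf <;>
        first
        | rfl
        | exact absurd hf (Ne.symm hmx)
        | exact absurd hf hxu
        | exact absurd hf hxz
        | exact absurd hf hmx
        | exact absurd hf hmu
        | exact absurd hf hmz
        | exact absurd hf (Ne.symm hxu)
        | exact absurd hf (Ne.symm hmu)
        | exact absurd hf huz
        | exact absurd hf (Ne.symm hxz)
        | exact absurd hf (Ne.symm hmz)
        | exact absurd hf (Ne.symm huz)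
  · -- r.length ≥ 3 : close the ear into a long cycle
    obtain ⟨ix, hix, hxeq⟩ := id hxS
    obtain ⟨iu, hiu, hueq⟩ := id huS
    simp only [Set.mem_setOf_eq] at hix hiu
    have hadjux : G.Adj u x := by
      rw [← hxeq, ← hueq]
      refine htriadj iu ix hiu hix ?_
      rw [hxeq, hueq]
      exact hxu.symm
    set L := r.length + 1 with hLdef
    refine ⟨fun i => r.getVert (i % L), L, by omega, ?_, ?_, ?_⟩
    · simp [hLdef]
    · intro i hi
      dsimp only
      rcases Nat.lt_or_ge i r.length with h | h
      · have h1 : i % L = i := Nat.mod_eq_of_lt (by omega)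
        have h2 : (i + 1) % L = i + 1 := Nat.mod_eq_of_lt (by omega)
        rw [h1, h2]
        exact r.adj_getVert_succ h
      · have hieq : i = r.length := by omega
        subst hieq
        have h1 : r.length % L = r.length := Nat.mod_eq_of_lt (by omega)
        have h2 : (r.length + 1) % L = 0 := by
          rw [hLdef]
          simp
        rw [h1, h2, r.getVert_length, r.getVert_zero]
        exact hadjux
    · intro i j hi hj hf
      dsimp only at hf
      rw [Nat.mod_eq_of_lt (by omega), Nat.mod_eq_of_lt (by omega)] at hf
      exact isPath_getVert_injOn hrpath i (by omega) j (by omega) hf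


end RX3

namespace RX3

open SimpleGraph Walk

variable {V : Type*} {G : SimpleGraph V}

lemma extend_to_univ [Fintype V] (hconn : G.Connected)
    (hcut : ∀ v : V, (G.induce ({v}ᶜ : Set V)).Connected) :
    ∀ (d : ℕ) (S : Set V), 2 ≤ S.ncard → Good G S (S.ncard - 2) →
      Fintype.card V - S.ncard ≤ d → Good G Set.univ (Fintype.card V - 2) := by
  intro d
  induction d with
  | zero =>
      intro S h2 hg hle
      have hSuniv : S = Set.univ := by
        by_contra hne
        have hlt : S.ncard < (Set.univ : Set V).ncard :=
          Set.ncard_lt_ncard (Set.ssubset_univ_iff.mpr hne) Set.finite_univ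
        rw [Set.ncard_univ, Nat.card_eq_fintype_card] at hlt
        omega
      subst hSuniv
      rwa [Set.ncard_univ, Nat.card_eq_fintype_card] at hg
  | succ d ih =>
      intro S h2 hg hle
      by_cases hne : S = Set.univ
      · subst hne
        rwa [Set.ncard_univ, Nat.card_eq_fintype_card] at hg
      · obtain ⟨S', k, hk1, hsub, hcard, hgood'⟩ := grow hconn hcut hg S.toFinite h2 hne
        have h2' : 2 ≤ S'.ncard := by omega
        have hg' : Good G S' (S'.ncard - 2) := by
          rw [hcard, show S.ncard + k - 2 = (S.ncard - 2) + k by omega]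
          exact hgood'
        exact ih S' h2' hg' (by omega)

lemma good_to_rx3 [Fintype V] (G : SimpleGraph V) (hn : 4 ≤ Fintype.card V)
    (h : Good G Set.univ (Fintype.card V - 2)) : G.rx3 ≤ Fintype.card V - 2 := by
  classical
  obtain ⟨c, hc⟩ := h
  have hmem : (Fintype.card V - 2) ∈ {k | ∃ c, G.IsRainbow3Coloring c k} := by
    refine ⟨fun e => if c e < Fintype.card V - 2 then c e else 0, ?_, ?_⟩
    · intro e _
      dsimp only
      split_ifs with h1
      · exact h1
      · omega
    · intro x y z
      obtain ⟨T, _, hco, hnc, hx, hy, hz, hinj, hbound⟩ :=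
        hc x (Set.mem_univ x) y (Set.mem_univ y) z (Set.mem_univ z)
      refine ⟨T, isTree_of_noCyc hco hnc, hx, hy, hz, ?_⟩
      intro e1 he1 e2 he2 heq
      dsimp only at heq
      rw [if_pos (hbound e1 he1), if_pos (hbound e2 he2)] at heq
      exact hinj he1 he2 heq
  exact Nat.sInf_le hmem

lemma base_ncard (f : ℕ → V) (ℓ : ℕ)
    (hinj : ∀ i j, i < ℓ → j < ℓ → f i = f j → i = j) :
    (f '' {i | i < ℓ}).ncard = ℓ := by
  rw [Set.ncard_image_of_injOn (s := {i | i < ℓ}) (fun i hi j hj hf => hinj i j hi hj hf)]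
  rw [show ({i | i < ℓ} : Set ℕ) = ↑(Finset.range ℓ) by ext; simp, Set.ncard_coe_finset,
    Finset.card_range]

end RX3

theorem stmt14 {V : Type*} [Fintype V] (G : SimpleGraph V) (h2 : G.TwoConnectedG)
    (hn : 4 ≤ Fintype.card V) :
    G.rx3 ≤ Fintype.card V - 2 := by
  obtain ⟨h3, hconn, hcut⟩ := h2
  obtain ⟨f, ℓ, hl4, hfc, hadj, hinj⟩ := RX3.exists_cycleFun4 hconn hcut hn
  have hbase := RX3.base_good f ℓ hl4 hfc hadj hinj
  have hnc := RX3.base_ncard f ℓ hinj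
  apply RX3.good_to_rx3 G hn
  apply RX3.extend_to_univ hconn hcut (Fintype.card V) (f '' {i | i < ℓ})
  · rw [hnc]; omega
  · rw [hnc]; exact hbase
  · exact Nat.sub_le _ _
end

section
/- Every connected (P₅, C₅)-free graph is a perfect connected-dominant graph: for each connected induced subgraph X of G, the domination number of X equals its connected domination number, γ(X) = γᶜ(X). -/
open SimpleGraph Finset

variable {V : Type*} {W : Type*}

set_option maxHeartbeats 1000000
section ZvMain
open SimpleGraph
variable {V : Type*}

lemma p5helper {H : SimpleGraph V}
    (hP5 : ¬ ∃ f : Fin 5 ↪ V, ∀ a b, H.Adj (f a) (f b) ↔ (pathGraph 5).Adj a b)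
    (v0 v1 v2 v3 v4 : V)
    (a01 : H.Adj v0 v1) (a12 : H.Adj v1 v2) (a23 : H.Adj v2 v3) (a34 : H.Adj v3 v4)
    (n02 : ¬H.Adj v0 v2) (n03 : ¬H.Adj v0 v3) (n04 : ¬H.Adj v0 v4)
    (n13 : ¬H.Adj v1 v3) (n14 : ¬H.Adj v1 v4) (n24 : ¬H.Adj v2 v4)
    (e02 : v0 ≠ v2) (e03 : v0 ≠ v3) (e04 : v0 ≠ v4)
    (e13 : v1 ≠ v3) (e14 : v1 ≠ v4) (e24 : v2 ≠ v4) : False := by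
  have e01 := a01.ne
  have e12 := a12.ne
  have e23 := a23.ne
  have e34 := a34.ne
  apply hP5
  refine ⟨⟨![v0, v1, v2, v3, v4], ?_⟩, ?_⟩
  · intro i j hij
    fin_cases i <;> fin_cases j <;> simp_all
  · intro a b
    fin_cases a <;> fin_cases b <;> simp [pathGraph_adj] <;>
      first
        | exact H.loopless _
        | assumption
        | exact a01.symm
        | exact a12.symm
        | exact a23.symm
        | exact a34.symm
        | exact fun h => n02 h.symm
        | exact fun h => n03 h.symm
        | exact fun h => n04 h.symm
        | exact fun h => n13 h.symm
        | exact fun h => n14 h.symm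
        | exact fun h => n24 h.symm
        | exact iff_of_false n02 (by decide)
        | exact iff_of_false (fun h => n02 h.symm) (by decide)
        | exact iff_of_false n03 (by decide)
        | exact iff_of_false (fun h => n03 h.symm) (by decide)
        | exact iff_of_false n04 (by decide)
        | exact iff_of_false (fun h => n04 h.symm) (by decide)
        | exact iff_of_false n13 (by decide)
        | exact iff_of_false (fun h => n13 h.symm) (by decide)
        | exact iff_of_false n14 (by decide)
        | exact iff_of_false (fun h => n14 h.symm) (by decide)
        | exact iff_of_false n24 (by decide)
        | exact iff_of_false (fun h => n24 h.symm) (by decide)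
        | exact iff_of_true a01 (by decide)
        | exact iff_of_true a01.symm (by decide)
        | exact iff_of_true a12 (by decide)
        | exact iff_of_true a12.symm (by decide)
        | exact iff_of_true a23 (by decide)
        | exact iff_of_true a23.symm (by decide)
        | exact iff_of_true a34 (by decide)
        | exact iff_of_true a34.symm (by decide)

lemma c5helper {H : SimpleGraph V}
    (hC5 : ¬ ∃ f : Fin 5 ↪ V, ∀ a b, H.Adj (f a) (f b) ↔ (cycleGraph 5).Adj a b)
    (v0 v1 v2 v3 v4 : V)
    (a01 : H.Adj v0 v1) (a12 : H.Adj v1 v2) (a23 : H.Adj v2 v3) (a34 : H.Adj v3 v4)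
    (a40 : H.Adj v4 v0)
    (n02 : ¬H.Adj v0 v2) (n03 : ¬H.Adj v0 v3)
    (n13 : ¬H.Adj v1 v3) (n14 : ¬H.Adj v1 v4) (n24 : ¬H.Adj v2 v4)
    (e02 : v0 ≠ v2) (e03 : v0 ≠ v3)
    (e13 : v1 ≠ v3) (e14 : v1 ≠ v4) (e24 : v2 ≠ v4) : False := by
  have e01 := a01.ne
  have e12 := a12.ne
  have e23 := a23.ne
  have e34 := a34.ne
  have e04 := a40.ne'
  apply hC5
  refine ⟨⟨![v0, v1, v2, v3, v4], ?_⟩, ?_⟩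
  · intro i j hij
    fin_cases i <;> fin_cases j <;> simp_all
  · intro a b
    fin_cases a <;> fin_cases b <;> rw [cycleGraph_adj] <;>
      first
        | exact H.loopless _
        | assumption
        | exact a01.symm
        | exact a12.symm
        | exact a23.symm
        | exact a34.symm
        | exact a40.symm
        | exact fun h => n02 h.symm
        | exact fun h => n03 h.symm
        | exact fun h => n13 h.symm
        | exact fun h => n14 h.symm
        | exact fun h => n24 h.symm
        | exact iff_of_false n02 (by decide)
        | exact iff_of_false (fun h => n02 h.symm) (by decide)
        | exact iff_of_false n03 (by decide)
        | exact iff_of_false (fun h => n03 h.symm) (by decide)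
        | exact iff_of_false n13 (by decide)
        | exact iff_of_false (fun h => n13 h.symm) (by decide)
        | exact iff_of_false n14 (by decide)
        | exact iff_of_false (fun h => n14 h.symm) (by decide)
        | exact iff_of_false n24 (by decide)
        | exact iff_of_false (fun h => n24 h.symm) (by decide)
        | exact iff_of_true a01 (by decide)
        | exact iff_of_true a01.symm (by decide)
        | exact iff_of_true a12 (by decide)
        | exact iff_of_true a12.symm (by decide)
        | exact iff_of_true a23 (by decide)
        | exact iff_of_true a23.symm (by decide)
        | exact iff_of_true a34 (by decide)
        | exact iff_of_true a34.symm (by decide)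
        | exact iff_of_true a40 (by decide)
        | exact iff_of_true a40.symm (by decide)
        | exact iff_of_false (H.loopless.irrefl _) (by decide)

namespace Zv


/-- Dominating set. -/
def Dom (H : SimpleGraph V) (D : Set V) : Prop := ∀ v ∉ D, ∃ u ∈ D, H.Adj u v

/-- Reachability inside an induced subgraph. -/
def R (H : SimpleGraph V) (D : Set V) (p q : V) : Prop :=
  ∃ (hp : p ∈ D) (hq : q ∈ D), (H.induce D).Reachable ⟨p, hp⟩ ⟨q, hq⟩

/-- Number of connected components of the induced subgraph. -/
noncomputable def c (H : SimpleGraph V) (D : Set V) : ℕ :=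
  Nat.card (H.induce D).ConnectedComponent

variable {H : SimpleGraph V} {D : Set V} {p q r : V}

lemma induce_adj_iff {a b : ↥D} : (H.induce D).Adj a b ↔ H.Adj a.1 b.1 := Iff.rfl

lemma R.refl (hp : p ∈ D) : R H D p p := ⟨hp, hp, Reachable.refl _⟩

lemma R.symm' (h : R H D p q) : R H D q p := by
  obtain ⟨hp, hq, h⟩ := h
  exact ⟨hq, hp, h.symm⟩

lemma R.trans' (h : R H D p q) (h' : R H D q r) : R H D p r := by
  obtain ⟨hp, hq, h⟩ := h
  obtain ⟨hq', hr, h'⟩ := h'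
  exact ⟨hp, hr, h.trans h'⟩

lemma R.of_adj (hp : p ∈ D) (hq : q ∈ D) (h : H.Adj p q) : R H D p q :=
  ⟨hp, hq, SimpleGraph.Adj.reachable (by exact h)⟩

lemma not_adj_of_not_R (hp : p ∈ D) (hq : q ∈ D) (h : ¬ R H D p q) : ¬ H.Adj p q :=
  fun ha => h (R.of_adj hp hq ha)

/-- Key counting lemma: a reachability-nondecreasing surjection that merges two
components strictly decreases the number of components. -/
lemma comps_lt [Finite V] {D D' : Set V} (f : ↥D → ↥D') (hsurj : Function.Surjective f)
    (hadj : ∀ a b : ↥D, H.Adj a.1 b.1 → (H.induce D').Reachable (f a) (f b))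
    (a b : ↥D) (hab : ¬(H.induce D).Reachable a b)
    (hfab : (H.induce D').Reachable (f a) (f b)) : c H D' < c H D := by
  have hreach : ∀ {x y : ↥D}, (H.induce D).Walk x y →
      (H.induce D').Reachable (f x) (f y) := by
    intro x y w
    induction w with
    | nil => exact Reachable.refl _
    | cons h p ih => exact (hadj _ _ h).trans ih
  let g : (H.induce D).ConnectedComponent → (H.induce D').ConnectedComponent :=
    ConnectedComponent.lift (fun x => (H.induce D').connectedComponentMk (f x))
      (fun x y w _ => ConnectedComponent.eq.mpr (hreach w))
  have hg : Function.Surjective g := by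
    intro cc
    induction cc using ConnectedComponent.ind with
    | _ y =>
      obtain ⟨x, rfl⟩ := hsurj y
      exact ⟨(H.induce D).connectedComponentMk x, rfl⟩
  have hgn : ¬Function.Injective g := by
    intro hinj
    have h1 : g ((H.induce D).connectedComponentMk a) =
        g ((H.induce D).connectedComponentMk b) := by
      show (H.induce D').connectedComponentMk (f a) = (H.induce D').connectedComponentMk (f b)
      exact ConnectedComponent.eq.mpr hfab
    exact hab (ConnectedComponent.eq.mp (hinj h1))
  have : Finite (H.induce D).ConnectedComponent :=
    Finite.of_surjective _ (SimpleGraph.ConnectedComponent.ind (fun v => ⟨v, rfl⟩) :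
      Function.Surjective ((H.induce D).connectedComponentMk))
  have : Finite (H.induce D').ConnectedComponent :=
    Finite.of_surjective _ (SimpleGraph.ConnectedComponent.ind (fun v => ⟨v, rfl⟩) :
      Function.Surjective ((H.induce D').connectedComponentMk))
  have hf1 : Fintype (H.induce D).ConnectedComponent := Fintype.ofFinite _
  have hf2 : Fintype (H.induce D').ConnectedComponent := Fintype.ofFinite _
  unfold c
  rw [Nat.card_eq_fintype_card, Nat.card_eq_fintype_card]
  exact Fintype.card_lt_of_surjective_not_injective g hg hgn

/-- Walks give distance bounds to intermediate vertices. -/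
lemma dist_getVert_le {u v : V} (W : H.Walk u v) (hc : H.Connected) (i : ℕ) :
    H.dist u (W.getVert i) ≤ i := by
  induction W generalizing i with
  | nil => simp [SimpleGraph.Walk.getVert, SimpleGraph.dist_self]
  | @cons x y z h p ih =>
    match i with
    | 0 => simp [SimpleGraph.Walk.getVert_zero]
    | (n+1) =>
      rw [SimpleGraph.Walk.getVert_cons_succ]
      calc H.dist x (p.getVert n) ≤ H.dist x y + H.dist y (p.getVert n) := hc.dist_triangle
        _ ≤ 1 + n := by
            have := ih n
            have h1 : H.dist x y ≤ 1 := by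
              rw [SimpleGraph.dist_eq_one_iff_adj.mpr h]
            omega
        _ = n + 1 := by omega

lemma dist_getVert_le' {u v : V} (W : H.Walk u v) (i : ℕ) :
    H.dist (W.getVert i) v ≤ W.length - i := by
  induction W generalizing i with
  | nil => simp [SimpleGraph.Walk.getVert, SimpleGraph.dist_self]
  | @cons x y z h p ih =>
    match i with
    | 0 =>
      simp only [SimpleGraph.Walk.getVert_zero, SimpleGraph.Walk.length_cons, Nat.sub_zero]
      exact le_trans (SimpleGraph.dist_le (Walk.cons h p)) (by simp)
    | (n+1) =>
      rw [SimpleGraph.Walk.getVert_cons_succ]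
      simpa using ih n

lemma swap2 [Finite V] {u v x : V}
    (hdom : Dom H D) (hu : u ∈ D) (hv : v ∈ D) (hx : x ∉ D)
    (hnR : ¬ R H D u v) (aux : H.Adj u x) (axv : H.Adj x v)
    (hS1 : ∀ b ∈ D, H.Adj v b → H.Adj x b)
    (hS2 : ∀ w ∉ D, (∀ d ∈ D, H.Adj d w → d = v) → H.Adj x w) :
    ∃ D' : Set V, Dom H D' ∧ D'.ncard = D.ncard ∧ c H D' < c H D := by
  classical
  have huv : u ≠ v := fun h => hnR (h ▸ R.refl hu)
  set D' : Set V := insert x (D \ {v}) with hD'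
  have hxD' : x ∈ D' := Set.mem_insert _ _
  have hmem : ∀ z ∈ D, z ≠ v → z ∈ D' := fun z hz hzv => Set.mem_insert_iff.mpr
    (Or.inr ⟨hz, hzv⟩)
  have huD' : u ∈ D' := hmem u hu huv
  refine ⟨D', ?_, ?_, ?_⟩
  · -- dominating
    intro z hz
    by_cases hzv : z = v
    · exact ⟨x, hxD', hzv ▸ axv⟩
    · have hzD : z ∉ D := fun hzD => hz (hmem z hzD hzv)
      by_cases hall : ∀ d ∈ D, H.Adj d z → d = v
      · exact ⟨x, hxD', hS2 z hzD hall⟩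
      · push_neg at hall
        obtain ⟨d, hd, hdz, hdv⟩ := hall
        exact ⟨d, hmem d hd hdv, hdz⟩
  · -- cardinality
    have hx' : x ∉ D \ {v} := fun h => hx h.1
    rw [hD', Set.ncard_insert_of_notMem hx', Set.ncard_diff_singleton_add_one hv]
  · -- components
    have hvD' : (⟨x, hxD'⟩ : ↥D') = ⟨x, hxD'⟩ := rfl
    set f : ↥D → ↥D' := fun a => if h : a.1 = v then ⟨x, hxD'⟩ else ⟨a.1, hmem a.1 a.2 h⟩
      with hf
    have hfv : ∀ (a : ↥D), a.1 = v → f a = ⟨x, hxD'⟩ := by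
      intro a ha; simp [hf, ha]
    have hfnv : ∀ (a : ↥D) (h : a.1 ≠ v), f a = ⟨a.1, hmem a.1 a.2 h⟩ := by
      intro a ha; simp [hf, ha]
    have hsurj : Function.Surjective f := by
      rintro ⟨b, hb⟩
      rcases Set.mem_insert_iff.mp hb with hbx | hbD
      · exact ⟨⟨v, hv⟩, by simp [hf, hbx]⟩
      · have hbv : b ≠ v := hbD.2
        refine ⟨⟨b, hbD.1⟩, ?_⟩
        simp only [hf, hbv, dif_neg, not_false_iff]
    have hadj : ∀ a b : ↥D, H.Adj a.1 b.1 → (H.induce D').Reachable (f a) (f b) := by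
      intro a b hab
      by_cases hav : a.1 = v
      · by_cases hbv : b.1 = v
        · rw [hav, hbv] at hab
          exact absurd hab (H.loopless.irrefl v)
        · rw [hfv a hav, hfnv b hbv]
          have : H.Adj x b.1 := hS1 b.1 b.2 (by rw [← hav]; exact hab)
          exact SimpleGraph.Adj.reachable (by exact this)
      · by_cases hbv : b.1 = v
        · rw [hfnv a hav, hfv b hbv]
          have : H.Adj x a.1 := hS1 a.1 a.2 (by rw [← hbv]; exact hab.symm)
          exact (SimpleGraph.Adj.reachable (by exact this)).symm
        · rw [hfnv a hav, hfnv b hbv]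
          exact SimpleGraph.Adj.reachable (by exact hab)
    refine comps_lt f hsurj hadj ⟨u, hu⟩ ⟨v, hv⟩ (fun h => hnR ⟨hu, hv, h⟩) ?_
    rw [hfnv ⟨u, hu⟩ huv, hfv ⟨v, hv⟩ rfl]
    exact SimpleGraph.Adj.reachable (by exact aux)

lemma swap3 [Finite V] {u v x y : V}
    (hdom : Dom H D) (hu : u ∈ D) (hv : v ∈ D) (hx : x ∉ D) (hy : y ∉ D)
    (hnR : ¬ R H D u v) (aux : H.Adj u x) (axy : H.Adj x y) (ayv : H.Adj y v)
    (hbu : ∀ a ∈ D, H.Adj a u → H.Adj a x)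
    (hbv : ∀ b ∈ D, H.Adj b v → H.Adj b y)
    (hpriv : ∀ w ∉ D, w ≠ x → w ≠ y → (∀ d ∈ D, H.Adj d w → d = u ∨ d = v) →
       H.Adj x w ∨ H.Adj y w) :
    ∃ D' : Set V, Dom H D' ∧ D'.ncard = D.ncard ∧ c H D' < c H D := by
  classical
  have huv : u ≠ v := fun h => hnR (h ▸ R.refl hu)
  have hxy : x ≠ y := axy.ne
  set D' : Set V := insert x (insert y (D \ {u, v})) with hD'
  have hxD' : x ∈ D' := Set.mem_insert _ _
  have hyD' : y ∈ D' := Set.mem_insert_iff.mpr (Or.inr (Set.mem_insert _ _))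
  have hmem : ∀ z ∈ D, z ≠ u → z ≠ v → z ∈ D' := fun z hz hzu hzv =>
    Set.mem_insert_iff.mpr (Or.inr (Set.mem_insert_iff.mpr (Or.inr
      ⟨hz, by simp [hzu, hzv]⟩)))
  refine ⟨D', ?_, ?_, ?_⟩
  · -- dominating
    intro z hz
    have hzx : z ≠ x := fun h => hz (h ▸ hxD')
    have hzy : z ≠ y := fun h => hz (h ▸ hyD')
    by_cases hzu : z = u
    · exact ⟨x, hxD', hzu ▸ aux.symm⟩
    by_cases hzv : z = v
    · exact ⟨y, hyD', hzv ▸ ayv⟩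
    have hzD : z ∉ D := fun hzD => hz (hmem z hzD hzu hzv)
    by_cases hall : ∀ d ∈ D, H.Adj d z → d = u ∨ d = v
    · rcases hpriv z hzD hzx hzy hall with h | h
      · exact ⟨x, hxD', h⟩
      · exact ⟨y, hyD', h⟩
    · push_neg at hall
      obtain ⟨d, hd, hdz, hdu, hdv⟩ := hall
      exact ⟨d, hmem d hd hdu hdv, hdz⟩
  · -- cardinality
    have h1 : D \ {u, v} = (D \ {u}) \ {v} := by
      ext z; simp only [Set.mem_diff, Set.mem_singleton_iff, Set.mem_insert_iff]; tauto
    have hyn : y ∉ insert y (D \ {u, v}) → True := fun _ => trivial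
    have hy2 : y ∉ D \ {u, v} := fun h => hy h.1
    have hx2 : x ∉ insert y (D \ {u, v}) := by
      intro h
      rcases Set.mem_insert_iff.mp h with h | h
      · exact hxy h
      · exact hx h.1
    have hvD : v ∈ D \ {u} := ⟨hv, by simp [Ne.symm huv, (fun h => huv h.symm : v ≠ u)]⟩
    rw [hD', Set.ncard_insert_of_notMem hx2, Set.ncard_insert_of_notMem hy2, h1]
    have e1 : ((D \ {u}) \ {v}).ncard + 1 = (D \ {u}).ncard :=
      Set.ncard_diff_singleton_add_one hvD
    have e2 : (D \ {u}).ncard + 1 = D.ncard := Set.ncard_diff_singleton_add_one hu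
    omega
  · -- components
    set f : ↥D → ↥D' := fun a =>
      if h : a.1 = u then ⟨x, hxD'⟩ else if h' : a.1 = v then ⟨y, hyD'⟩
      else ⟨a.1, hmem a.1 a.2 h h'⟩ with hf
    have hfu : ∀ (a : ↥D), a.1 = u → f a = ⟨x, hxD'⟩ := by intro a ha; simp [hf, ha]
    have hfv : ∀ (a : ↥D), a.1 = v → f a = ⟨y, hyD'⟩ := by
      intro a ha
      have h2 : a.1 ≠ u := by rw [ha]; exact fun h => huv h.symm
      simp only [hf, h2, dif_neg, not_false_iff, ha, dif_pos]
      rw [dif_neg (show ¬v = u from fun h => huv h.symm)]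
    have hfn : ∀ (a : ↥D) (h : a.1 ≠ u) (h' : a.1 ≠ v), f a = ⟨a.1, hmem a.1 a.2 h h'⟩ := by
      intro a h h'; simp [hf, h, h']
    have hsurj : Function.Surjective f := by
      rintro ⟨b, hb⟩
      rcases Set.mem_insert_iff.mp hb with hbx | hb2
      · exact ⟨⟨u, hu⟩, by rw [hfu ⟨u, hu⟩ rfl]; exact Subtype.ext hbx.symm⟩
      rcases Set.mem_insert_iff.mp hb2 with hby | hbD
      · exact ⟨⟨v, hv⟩, by rw [hfv ⟨v, hv⟩ rfl]; exact Subtype.ext hby.symm⟩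
      · have h1 : b ≠ u := fun h => (hbD.2 : b ∉ ({u, v} : Set V)) (by simp [h])
        have h2 : b ≠ v := fun h => (hbD.2 : b ∉ ({u, v} : Set V)) (by simp [h])
        exact ⟨⟨b, hbD.1⟩, by rw [hfn ⟨b, hbD.1⟩ h1 h2]⟩
    have hadjf : ∀ a b : ↥D, H.Adj a.1 b.1 → (H.induce D').Reachable (f a) (f b) := by
      have key : ∀ a b : ↥D, H.Adj a.1 b.1 → a.1 = u →
          (H.induce D').Reachable (f a) (f b) := by
        intro a b hab hau
        by_cases hbv : b.1 = v
        · exfalso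
          have : H.Adj u v := by rw [← hau, ← hbv]; exact hab
          exact hnR ⟨hu, hv, SimpleGraph.Adj.reachable (by exact this)⟩
        · have hbu2 : b.1 ≠ u := fun h => by rw [hau, h] at hab; exact H.loopless.irrefl u hab
          rw [hfu a hau, hfn b hbu2 hbv]
          have : H.Adj b.1 x := hbu b.1 b.2 (by rw [← hau]; exact hab.symm)
          exact (SimpleGraph.Adj.reachable (by exact this)).symm
      have key2 : ∀ a b : ↥D, H.Adj a.1 b.1 → a.1 = v →
          (H.induce D').Reachable (f a) (f b) := by
        intro a b hab hav
        by_cases hbu' : b.1 = u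
        · exact (key b a hab.symm hbu').symm
        · by_cases hbv2 : b.1 = v
          · exfalso
            rw [hav, hbv2] at hab
            exact H.loopless.irrefl v hab
          · rw [hfv a hav, hfn b hbu' hbv2]
            have : H.Adj b.1 y := hbv b.1 b.2 (by rw [← hav]; exact hab.symm)
            exact (SimpleGraph.Adj.reachable (by exact this)).symm
      intro a b hab
      by_cases hau : a.1 = u
      · exact key a b hab hau
      by_cases hav : a.1 = v
      · exact key2 a b hab hav
      by_cases hbu' : b.1 = u
      · exact (key b a hab.symm hbu').symm
      by_cases hbv : b.1 = v
      · exact (key2 b a hab.symm hbv).symm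
      · rw [hfn a hau hav, hfn b hbu' hbv]
        exact SimpleGraph.Adj.reachable (by exact hab)
    refine comps_lt f hsurj hadjf ⟨u, hu⟩ ⟨v, hv⟩ (fun h => hnR ⟨hu, hv, h⟩) ?_
    rw [hfu ⟨u, hu⟩ rfl, hfv ⟨v, hv⟩ rfl]
    exact SimpleGraph.Adj.reachable (by exact axy)

variable {H : SimpleGraph V} {D : Set V}

/-- In the distance-2 configuration, if some `D`-neighbor `a` of `u` is not adjacent
to `x`, then `x` is adjacent to every private neighbor `w` of `v`. -/
lemma step2 {u v x : V}
    (hP5 : ¬ ∃ f : Fin 5 ↪ V, ∀ a b, H.Adj (f a) (f b) ↔ (pathGraph 5).Adj a b)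
    (hu : u ∈ D) (hv : v ∈ D) (hx : x ∉ D)
    (hnR : ¬ R H D u v) (aux : H.Adj u x) (axv : H.Adj x v) (nuv : ¬H.Adj u v)
    {a : V} (ha : a ∈ D) (hua : H.Adj u a) (hxa : ¬H.Adj x a)
    {w : V} (hw : w ∉ D) (hvw : H.Adj v w) (hall : ∀ d ∈ D, H.Adj d w → d = v) :
    H.Adj x w := by
  by_contra hxw
  have huv : u ≠ v := fun h => hnR (h ▸ R.refl hu)
  have hRua : R H D u a := R.of_adj hu ha hua
  have hav : a ≠ v := fun h => nuv (h ▸ hua)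
  -- P5 : w - v - x - u - a
  refine p5helper hP5 w v x u a hvw.symm axv.symm aux.symm hua ?_ ?_ ?_ ?_ ?_ ?_ ?_ ?_ ?_ ?_ ?_ ?_
  · exact fun h => hxw h.symm
  · exact fun h => huv (hall u hu h.symm)
  · exact fun h => hav (hall a ha h.symm)
  · exact fun h => nuv h.symm
  · exact fun h => hnR (hRua.trans' (R.of_adj ha hv h.symm))
  · exact hxa
  · -- w ≠ x
    intro h
    exact huv (hall u hu (h ▸ aux))
  · exact fun h => hw (h ▸ hu)
  · exact fun h => hw (h ▸ ha)
  · exact fun h => huv h.symm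
  · exact fun h => hav h.symm
  · exact fun h => hx (h ▸ ha)

/-- In the distance-2 configuration, if some `D`-neighbor `a` of `u` is not adjacent
to `x`, then `x` is adjacent to every `D`-neighbor of `v`. -/
lemma step1 {u v x : V}
    (hP5 : ¬ ∃ f : Fin 5 ↪ V, ∀ a b, H.Adj (f a) (f b) ↔ (pathGraph 5).Adj a b)
    (hu : u ∈ D) (hv : v ∈ D) (hx : x ∉ D)
    (hnR : ¬ R H D u v) (aux : H.Adj u x) (axv : H.Adj x v) (nuv : ¬H.Adj u v)
    {a : V} (ha : a ∈ D) (hua : H.Adj u a) (hxa : ¬H.Adj x a)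
    {b : V} (hb : b ∈ D) (hvb : H.Adj v b) :
    H.Adj x b := by
  by_contra hxb
  have huv : u ≠ v := fun h => hnR (h ▸ R.refl hu)
  have hRua : R H D u a := R.of_adj hu ha hua
  have hRvb : R H D v b := R.of_adj hv hb hvb
  have hav : a ≠ v := fun h => nuv (h ▸ hua)
  -- P5 : a - u - x - v - b
  refine p5helper hP5 a u x v b hua.symm aux axv hvb ?_ ?_ ?_ ?_ ?_ ?_ ?_ ?_ ?_ ?_ ?_ ?_
  · exact fun h => hxa h.symm
  · exact fun h => hnR (hRua.trans' (R.of_adj ha hv h))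
  · exact fun h => hnR ((hRua.trans' (R.of_adj ha hb h)).trans' hRvb.symm')
  · exact nuv
  · exact fun h => hnR ((R.of_adj hu hb h).trans' hRvb.symm')
  · exact hxb
  · exact fun h => hx (by rw [← h]; exact ha)
  · exact hav
  · exact fun h => hnR ((show R H D u b by rw [← h]; exact hRua).trans' hRvb.symm')
  · exact huv
  · exact fun h => hnR (R.symm' (show R H D v u by rw [h]; exact hRvb))
  · exact fun h => hx (by rw [h]; exact hb)

/-- In the distance-2 configuration, if `u` has a private neighbor `w` not adjacent
to `x`, then `x` is adjacent to every private neighbor `w'` of `v`. -/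
lemma step3 {u v x : V}
    (hP5 : ¬ ∃ f : Fin 5 ↪ V, ∀ a b, H.Adj (f a) (f b) ↔ (pathGraph 5).Adj a b)
    (hC5 : ¬ ∃ f : Fin 5 ↪ V, ∀ a b, H.Adj (f a) (f b) ↔ (cycleGraph 5).Adj a b)
    (hu : u ∈ D) (hv : v ∈ D) (hx : x ∉ D)
    (hnR : ¬ R H D u v) (aux : H.Adj u x) (axv : H.Adj x v) (nuv : ¬H.Adj u v)
    {w : V} (hw : w ∉ D) (huw : H.Adj u w) (hallw : ∀ d ∈ D, H.Adj d w → d = u)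
    (hxw : ¬H.Adj x w)
    {w' : V} (hw' : w' ∉ D) (hvw' : H.Adj v w') (hallw' : ∀ d ∈ D, H.Adj d w' → d = v) :
    H.Adj x w' := by
  by_contra hxw'
  have huv : u ≠ v := fun h => hnR (h ▸ R.refl hu)
  have ewx : w ≠ x := fun h => huv (hallw v hv (by rw [h]; exact axv.symm)).symm
  have ew'x : w' ≠ x := fun h => huv (hallw' u hu (by rw [h]; exact aux))
  have nwv : ¬H.Adj v w := fun h => huv (hallw v hv h).symm
  have nuw' : ¬H.Adj u w' := fun h => huv (hallw' u hu h)
  have eww' : w ≠ w' := fun h => huv (hallw' u hu (h ▸ huw))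
  by_cases hww' : H.Adj w w'
  · -- C5 : w - u - x - v - w' - w
    refine c5helper hC5 w u x v w' huw.symm aux axv hvw' hww'.symm
      ?_ ?_ ?_ ?_ ?_ ?_ ?_ ?_ ?_ ?_
    · exact fun h => hxw h.symm
    · exact fun h => nwv h.symm
    · exact nuv
    · exact nuw'
    · exact hxw'
    · exact ewx
    · exact fun h => hw (h ▸ hv)
    · exact huv
    · exact fun h => hw' (h.symm ▸ hu)
    · exact fun h => ew'x h.symm
  · -- P5 : w - u - x - v - w'
    refine p5helper hP5 w u x v w' huw.symm aux axv hvw'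
      ?_ ?_ ?_ ?_ ?_ ?_ ?_ ?_ ?_ ?_ ?_ ?_
    · exact fun h => hxw h.symm
    · exact fun h => nwv h.symm
    · exact hww'
    · exact nuv
    · exact nuw'
    · exact hxw'
    · exact ewx
    · exact fun h => hw (h ▸ hv)
    · exact eww'
    · exact huv
    · exact fun h => hw' (h.symm ▸ hu)
    · exact fun h => ew'x h.symm

/-- Distance-2 case: produce a better dominating set. -/
lemma case2 [Finite V] {u v x : V}
    (hP5 : ¬ ∃ f : Fin 5 ↪ V, ∀ a b, H.Adj (f a) (f b) ↔ (pathGraph 5).Adj a b)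
    (hC5 : ¬ ∃ f : Fin 5 ↪ V, ∀ a b, H.Adj (f a) (f b) ↔ (cycleGraph 5).Adj a b)
    (hdom : Dom H D) (hu : u ∈ D) (hv : v ∈ D) (hx : x ∉ D)
    (hnR : ¬ R H D u v) (aux : H.Adj u x) (axv : H.Adj x v) (nuv : ¬H.Adj u v) :
    ∃ D' : Set V, Dom H D' ∧ D'.ncard = D.ncard ∧ c H D' < c H D := by
  classical
  have hnR' : ¬ R H D v u := fun h => hnR h.symm'
  have nvu : ¬H.Adj v u := fun h => nuv h.symm
  by_cases hSu1 : ∀ a ∈ D, H.Adj u a → H.Adj x a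
  · by_cases hSu2 : ∀ w, w ∉ D → (∀ d ∈ D, H.Adj d w → d = u) → H.Adj x w
    · exact swap2 hdom hv hu hx hnR' axv.symm aux.symm hSu1 (fun w hw h => hSu2 w hw h)
    · push_neg at hSu2
      obtain ⟨w, hw, hallw, hxw⟩ := hSu2
      have huw : H.Adj u w := by
        obtain ⟨d, hd, hdw⟩ := hdom w hw
        exact (hallw d hd hdw) ▸ hdw
      refine swap2 hdom hu hv hx hnR aux axv ?_ ?_
      · -- every D-neighbor of v is adjacent to x
        intro b hb hvb
        by_contra hxb
        exact hxw (step2 hP5 hv hu hx hnR' axv.symm aux.symm nvu hb hvb hxb hw huw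
          hallw)
      · -- every private neighbor of v is adjacent to x
        intro w' hw' hall'
        have hvw' : H.Adj v w' := by
          obtain ⟨d, hd, hdw⟩ := hdom w' hw'
          exact (hall' d hd hdw) ▸ hdw
        exact step3 hP5 hC5 hu hv hx hnR aux axv nuv hw huw hallw hxw hw' hvw' hall'
  · push_neg at hSu1
    obtain ⟨a, ha, hua, hxa⟩ := hSu1
    refine swap2 hdom hu hv hx hnR aux axv ?_ ?_
    · intro b hb hvb
      exact step1 hP5 hu hv hx hnR aux axv nuv ha hua hxa hb hvb
    · intro w hw hall
      have hvw : H.Adj v w := by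
        obtain ⟨d, hd, hdw⟩ := hdom w hw
        exact (hall d hd hdw) ▸ hdw
      exact step2 hP5 hu hv hx hnR aux axv nuv ha hua hxa hw hvw hall

/-- Distance-3 case: produce a better dominating set. -/
lemma case3 [Finite V] {u x y v : V}
    (hP5 : ¬ ∃ f : Fin 5 ↪ V, ∀ a b, H.Adj (f a) (f b) ↔ (pathGraph 5).Adj a b)
    (hdom : Dom H D) (hu : u ∈ D) (hv : v ∈ D) (hx : x ∉ D) (hy : y ∉ D)
    (hnR : ¬ R H D u v) (aux : H.Adj u x) (axy : H.Adj x y) (ayv : H.Adj y v)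
    (nuy : ¬H.Adj u y) (nuv : ¬H.Adj u v) (nxv : ¬H.Adj x v)
    (hsep : ∀ p q, p ∈ D → q ∈ D → ¬ R H D p q → ∀ z, ¬(H.Adj p z ∧ H.Adj z q)) :
    ∃ D' : Set V, Dom H D' ∧ D'.ncard = D.ncard ∧ c H D' < c H D := by
  classical
  have huv : u ≠ v := fun h => hnR (h ▸ R.refl hu)
  have hdx : ∀ a ∈ D, H.Adj a x → R H D a u := by
    intro a ha hax
    by_contra hr
    exact hsep a u ha hu hr x ⟨hax, aux.symm⟩
  have hdy : ∀ b ∈ D, H.Adj b y → R H D b v := by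
    intro b hb hby
    by_contra hr
    exact hsep b v hb hv hr y ⟨hby, ayv⟩
  have hbu : ∀ a ∈ D, H.Adj a u → H.Adj a x := by
    intro a ha hau
    by_contra hax
    have hRua : R H D u a := R.of_adj hu ha hau.symm
    -- P5 : a - u - x - y - v
    refine p5helper hP5 a u x y v hau aux axy ayv hax ?_ ?_ nuy nuv nxv
      ?_ ?_ ?_ ?_ huv ?_
    · exact fun h => hnR (hRua.trans' (hdy a ha h))
    · exact fun h => hnR (hRua.trans' (R.of_adj ha hv h))
    · exact fun h => hx (h ▸ ha)
    · exact fun h => hy (h ▸ ha)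
    · exact fun h => hnR (h ▸ hRua)
    · exact fun h => hy (h.symm ▸ hu)
    · exact fun h => hx (by rw [h]; exact hv)
  have hbv : ∀ b ∈ D, H.Adj b v → H.Adj b y := by
    intro b hb hbv'
    by_contra hby
    have hRvb : R H D v b := R.of_adj hv hb hbv'.symm
    -- P5 : b - v - y - x - u
    refine p5helper hP5 b v y x u hbv' ayv.symm axy.symm aux.symm hby
      ?_ ?_ ?_ ?_ ?_ ?_ ?_ ?_ ?_ ?_ ?_
    · exact fun h => hnR ((hdx b hb h).symm'.trans' hRvb.symm')
    · exact fun h => hnR ((R.of_adj hb hu h).symm'.trans' hRvb.symm')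
    · exact fun h => nxv h.symm
    · exact fun h => nuv h.symm
    · exact fun h => nuy h.symm
    · exact fun h => hy (h ▸ hb)
    · exact fun h => hx (h ▸ hb)
    · exact fun h => nuv (h ▸ hbv' : H.Adj u v)
    · exact fun h => hx (by rw [← h]; exact hv)
    · exact fun h => huv h.symm
    · exact fun h => hy (by rw [h]; exact hu)
  have hpriv : ∀ w, w ∉ D → w ≠ x → w ≠ y → (∀ d ∈ D, H.Adj d w → d = u ∨ d = v) →
      H.Adj x w ∨ H.Adj y w := by
    intro w hw hwx hwy hall
    by_contra hcon
    push_neg at hcon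
    obtain ⟨hxw, hyw⟩ := hcon
    obtain ⟨d, hd, hdw⟩ := hdom w hw
    rcases hall d hd hdw with h | h
    · -- w is adjacent to u; P5 : w - u - x - y - v
      have huw : H.Adj u w := h ▸ hdw
      refine p5helper hP5 w u x y v huw.symm aux axy ayv
        ?_ ?_ ?_ nuy nuv nxv hwx hwy ?_ ?_ huv ?_
      · exact fun h' => hxw h'.symm
      · exact fun h' => hyw h'.symm
      · exact fun h' => hsep u v hu hv hnR w ⟨huw, h'⟩
      · exact fun h' => hw (by rw [h']; exact hv)
      · exact fun h' => hy (by rw [← h']; exact hu)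
      · exact fun h' => hx (by rw [h']; exact hv)
    · -- w is adjacent to v; P5 : w - v - y - x - u
      have hvw : H.Adj v w := h ▸ hdw
      refine p5helper hP5 w v y x u hvw.symm ayv.symm axy.symm aux.symm
        ?_ ?_ ?_ ?_ ?_ ?_ hwy hwx ?_ ?_ ?_ ?_
      · exact fun h' => hyw h'.symm
      · exact fun h' => hxw h'.symm
      · exact fun h' => hsep u v hu hv hnR w ⟨h'.symm, hvw.symm⟩
      · exact fun h' => nxv h'.symm
      · exact fun h' => nuv h'.symm
      · exact fun h' => nuy h'.symm
      · exact fun h' => hw (by rw [h']; exact hu)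
      · exact fun h' => hx (by rw [← h']; exact hv)
      · exact fun h' => huv h'.symm
      · exact fun h' => hy (by rw [h']; exact hu)
  exact swap3 hdom hu hv hx hy hnR aux axy ayv hbu hbv hpriv

/-- Main structural lemma: a connected (P5,C5)-free graph has a connected minimum
dominating set. -/
lemma main_exists [Fintype V] (hc : H.Connected)
    (hP5 : ¬ ∃ f : Fin 5 ↪ V, ∀ a b, H.Adj (f a) (f b) ↔ (pathGraph 5).Adj a b)
    (hC5 : ¬ ∃ f : Fin 5 ↪ V, ∀ a b, H.Adj (f a) (f b) ↔ (cycleGraph 5).Adj a b) :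
    ∃ D : Set V, Dom H D ∧ (H.induce D).Connected ∧
      ∀ D' : Set V, Dom H D' → D.ncard ≤ D'.ncard := by
  classical
  have hSne : {m : ℕ | ∃ D : Set V, Dom H D ∧ D.ncard = m}.Nonempty :=
    ⟨(Set.univ : Set V).ncard, Set.univ, fun v hv => absurd (Set.mem_univ v) hv, rfl⟩
  set γ := sInf {m : ℕ | ∃ D : Set V, Dom H D ∧ D.ncard = m} with hγdef
  obtain ⟨D0, hD0, hD0card⟩ := Nat.sInf_mem hSne
  have hTne : {k : ℕ | ∃ D : Set V, Dom H D ∧ D.ncard = γ ∧ c H D = k}.Nonempty :=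
    ⟨c H D0, D0, hD0, hD0card, rfl⟩
  obtain ⟨D, hdom, hDγ, hcD⟩ := Nat.sInf_mem hTne
  have hminsize : ∀ D' : Set V, Dom H D' → γ ≤ D'.ncard := fun D' h =>
    Nat.sInf_le ⟨D', h, rfl⟩
  have hmincomp : ∀ D' : Set V, Dom H D' → D'.ncard = γ →
      sInf {k : ℕ | ∃ D : Set V, Dom H D ∧ D.ncard = γ ∧ c H D = k} ≤ c H D' :=
    fun D' h h' => Nat.sInf_le ⟨D', h, h', rfl⟩
  suffices hconn : (H.induce D).Connected by
    exact ⟨D, hdom, hconn, fun D' h => hDγ ▸ hminsize D' h⟩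
  by_contra hnc
  have hVne : Nonempty V := hc.nonempty
  have hDne : Nonempty ↥D := by
    rcases Set.eq_empty_or_nonempty D with h | h
    · obtain ⟨v⟩ := hVne
      obtain ⟨d, hd, -⟩ := hdom v (by rw [h]; exact Set.notMem_empty v)
      rw [h] at hd
      exact absurd hd (Set.notMem_empty d)
    · exact h.to_subtype
  obtain ⟨a, b, hab⟩ : ∃ a b : ↥D, ¬(H.induce D).Reachable a b := by
    by_contra h2
    push_neg at h2
    exact hnc ((connected_iff _).mpr ⟨h2, hDne⟩)
  have hPne : {n : ℕ | ∃ p q : V, p ∈ D ∧ q ∈ D ∧ ¬ R H D p q ∧ H.dist p q = n}.Nonempty := by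
    refine ⟨H.dist a.1 b.1, a.1, b.1, a.2, b.2, ?_, rfl⟩
    rintro ⟨hp, hq, hr⟩
    exact hab hr
  set ℓ := sInf {n : ℕ | ∃ p q : V, p ∈ D ∧ q ∈ D ∧ ¬ R H D p q ∧ H.dist p q = n} with hℓ
  obtain ⟨u, v, hu, hv, hnR, hdist⟩ := Nat.sInf_mem hPne
  have hminP : ∀ p q : V, p ∈ D → q ∈ D → ¬ R H D p q → ℓ ≤ H.dist p q :=
    fun p q hp hq h => Nat.sInf_le ⟨p, q, hp, hq, h, rfl⟩
  have huv : u ≠ v := fun h => hnR (h ▸ R.refl hu)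
  have hl2 : 2 ≤ ℓ := by
    have h0 : H.dist u v ≠ 0 := by
      rw [SimpleGraph.dist_ne_zero_iff_ne_and_reachable]
      exact ⟨huv, hc.preconnected u v⟩
    have h1 : H.dist u v ≠ 1 := fun h =>
      hnR (R.of_adj hu hv (SimpleGraph.dist_eq_one_iff_adj.mp h))
    omega
  obtain ⟨W, hW⟩ := hc.exists_walk_length_eq_dist u v
  have hlen : W.length = ℓ := by rw [hW, hdist]
  have hadjW : ∀ i, i < ℓ → H.Adj (W.getVert i) (W.getVert (i + 1)) := by
    intro i hi
    exact W.adj_getVert_succ (by rw [hlen]; exact hi)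
  have hdleu : ∀ i, H.dist u (W.getVert i) ≤ i := dist_getVert_le W hc
  have hdlev : ∀ i, H.dist (W.getVert i) v ≤ ℓ - i := fun i => by
    have h := dist_getVert_le' W i
    rwa [hlen] at h
  have hfar : ∀ i j, i + 2 ≤ j → j ≤ ℓ → 2 ≤ H.dist (W.getVert i) (W.getVert j) := by
    intro i j hij hj
    have t1 : H.dist u v ≤ H.dist u (W.getVert j) + H.dist (W.getVert j) v :=
      hc.dist_triangle
    have t2 : H.dist u (W.getVert j) ≤
        H.dist u (W.getVert i) + H.dist (W.getVert i) (W.getVert j) := hc.dist_triangle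
    have g1 := hdleu i
    have g2 := hdlev j
    omega
  have hnadj : ∀ i j, i + 2 ≤ j → j ≤ ℓ → ¬H.Adj (W.getVert i) (W.getVert j) := by
    intro i j hij hj hadj'
    have g1 := hfar i j hij hj
    have g2 := SimpleGraph.dist_eq_one_iff_adj.mpr hadj'
    omega
  have hne : ∀ i j, i + 2 ≤ j → j ≤ ℓ → W.getVert i ≠ W.getVert j := by
    intro i j hij hj heq
    have h2 := hfar i j hij hj
    rw [heq] at h2
    simp [SimpleGraph.dist_self] at h2
  have hint : ∀ i, 0 < i → i < ℓ → W.getVert i ∉ D := by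
    intro i hi0 hil hiD
    by_cases hr : R H D u (W.getVert i)
    · have hnr2 : ¬ R H D (W.getVert i) v := fun h => hnR (hr.trans' h)
      have g1 := hminP _ v hiD hv hnr2
      have g2 := hdlev i
      omega
    · have g1 := hminP u _ hu hiD hr
      have g2 := hdleu i
      omega
  have hl3 : ℓ ≤ 3 := by
    by_contra h4
    push_neg at h4
    exact p5helper hP5 (W.getVert 0) (W.getVert 1) (W.getVert 2) (W.getVert 3) (W.getVert 4)
      (hadjW 0 (by omega)) (hadjW 1 (by omega)) (hadjW 2 (by omega)) (hadjW 3 (by omega))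
      (hnadj 0 2 (by omega) (by omega)) (hnadj 0 3 (by omega) (by omega))
      (hnadj 0 4 (by omega) (by omega)) (hnadj 1 3 (by omega) (by omega))
      (hnadj 1 4 (by omega) (by omega)) (hnadj 2 4 (by omega) (by omega))
      (hne 0 2 (by omega) (by omega)) (hne 0 3 (by omega) (by omega))
      (hne 0 4 (by omega) (by omega)) (hne 1 3 (by omega) (by omega))
      (hne 1 4 (by omega) (by omega)) (hne 2 4 (by omega) (by omega))
  have hg0 : W.getVert 0 = u := W.getVert_zero
  have hgl : W.getVert ℓ = v := by rw [← hlen]; exact W.getVert_length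
  have hfinal : ∃ D' : Set V, Dom H D' ∧ D'.ncard = D.ncard ∧ c H D' < c H D := by
    rcases (by omega : ℓ = 2 ∨ ℓ = 3) with h2 | h3
    · have hx : W.getVert 1 ∉ D := hint 1 (by omega) (by omega)
      have a1 : H.Adj u (W.getVert 1) := by
        have h := hadjW 0 (by omega)
        rwa [hg0] at h
      have hg2 : W.getVert 2 = v := by rw [← h2]; exact hgl
      have a2 : H.Adj (W.getVert 1) v := by
        have h := hadjW 1 (by omega)
        rwa [show (1 : ℕ) + 1 = 2 from rfl, hg2] at h
      have n02 : ¬H.Adj u v := by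
        have h := hnadj 0 2 (by omega) (by omega)
        rwa [hg0, hg2] at h
      exact case2 hP5 hC5 hdom hu hv hx hnR a1 a2 n02
    · have hx : W.getVert 1 ∉ D := hint 1 (by omega) (by omega)
      have hy : W.getVert 2 ∉ D := hint 2 (by omega) (by omega)
      have a1 : H.Adj u (W.getVert 1) := by
        have h := hadjW 0 (by omega)
        rwa [hg0] at h
      have a2 : H.Adj (W.getVert 1) (W.getVert 2) := hadjW 1 (by omega)
      have hg3 : W.getVert 3 = v := by rw [← h3]; exact hgl
      have a3 : H.Adj (W.getVert 2) v := by
        have h := hadjW 2 (by omega)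
        rwa [show (2 : ℕ) + 1 = 3 from rfl, hg3] at h
      have n13 : ¬H.Adj u (W.getVert 2) := by
        have h := hnadj 0 2 (by omega) (by omega)
        rwa [hg0] at h
      have n03 : ¬H.Adj u v := by
        have h := hnadj 0 3 (by omega) (by omega)
        rwa [hg0, hg3] at h
      have n23 : ¬H.Adj (W.getVert 1) v := by
        have h := hnadj 1 3 (by omega) (by omega)
        rwa [hg3] at h
      have hsep : ∀ p q, p ∈ D → q ∈ D → ¬ R H D p q →
          ∀ z, ¬(H.Adj p z ∧ H.Adj z q) := by
        rintro p q hp hq hpq z ⟨hz1, hz2⟩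
        have g1 := hminP p q hp hq hpq
        have g2 : H.dist p q ≤ 2 :=
          le_trans (SimpleGraph.dist_le (Walk.cons hz1 (Walk.cons hz2 Walk.nil))) (by simp)
        omega
      exact case3 hP5 hdom hu hv hx hy hnR a1 a2 a3 n13 n03 n23 hsep
  obtain ⟨D', hD'dom, hD'card, hD'c⟩ := hfinal
  have hfin := hmincomp D' hD'dom (by rw [hD'card, hDγ])
  omega

end Zv
end ZvMain

section ZvGlue
open SimpleGraph
variable {V : Type*}

lemma Zv.dom_iff [Fintype V] {H : SimpleGraph V} {D : Set V} :
    H.IsKDominatingSet 1 D ↔ Zv.Dom H D := by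
  constructor
  · intro h v hv
    have h1 := h v hv
    have h2 : (H.neighborSet v ∩ D).Nonempty :=
      (Set.ncard_pos (Set.toFinite _)).mp (by omega)
    obtain ⟨w, hw1, hw2⟩ := h2
    exact ⟨w, hw2, (by exact hw1 : H.Adj v w).symm⟩
  · intro h v hv
    obtain ⟨w, hw, hwv⟩ := h v hv
    have hmem : w ∈ H.neighborSet v ∩ D := ⟨hwv.symm, hw⟩
    have := (Set.ncard_pos (Set.toFinite _)).mpr ⟨w, hmem⟩
    omega

theorem Zv.key [Fintype V] {H : SimpleGraph V} (hc : H.Connected)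
    (hP5 : ¬ ∃ f : Fin 5 ↪ V, ∀ a b, H.Adj (f a) (f b) ↔ (pathGraph 5).Adj a b)
    (hC5 : ¬ ∃ f : Fin 5 ↪ V, ∀ a b, H.Adj (f a) (f b) ↔ (cycleGraph 5).Adj a b) :
    H.domNum = H.connectedKDominationNum 1 := by
  obtain ⟨D, hdom, hconn, hmin⟩ := Zv.main_exists hc hP5 hC5
  unfold SimpleGraph.domNum SimpleGraph.connectedKDominationNum
  apply le_antisymm
  · apply sInf_le_sInf
    rintro m ⟨D', hD', hm⟩
    exact ⟨D', hD'.1, hm⟩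
  · refine le_trans (sInf_le ⟨D, ⟨Zv.dom_iff.mpr hdom, hconn⟩, rfl⟩) ?_
    refine le_sInf ?_
    rintro m ⟨D', hD', rfl⟩
    exact_mod_cast hmin D' (Zv.dom_iff.mp hD')

end ZvGlue

theorem stmt19 {V : Type*} [Fintype V] (G : SimpleGraph V) (h : G.Connected)
    (hP5 : IsInducedSubgraphFree G (SimpleGraph.pathGraph 5))
    (hC5 : IsInducedSubgraphFree G (SimpleGraph.cycleGraph 5)) :
    ∀ S : Set V, (G.induce S).Connected →
      (G.induce S).domNum = (G.induce S).connectedKDominationNum 1 := by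
  intro S hS
  classical
  haveI : Fintype ↥S := Fintype.ofFinite ↥S
  have hP5' : ¬ ∃ f : Fin 5 ↪ ↥S, ∀ a b,
      (G.induce S).Adj (f a) (f b) ↔ (SimpleGraph.pathGraph 5).Adj a b := by
    rintro ⟨f, hf⟩
    exact hP5 ⟨f.trans (Function.Embedding.subtype _), fun a b => hf a b⟩
  have hC5' : ¬ ∃ f : Fin 5 ↪ ↥S, ∀ a b,
      (G.induce S).Adj (f a) (f b) ↔ (SimpleGraph.cycleGraph 5).Adj a b := by
    rintro ⟨f, hf⟩
    exact hC5 ⟨f.trans (Function.Embedding.subtype _), fun a b => hf a b⟩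
  exact Zv.key hS hP5' hC5'
end
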